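/- arXiv:1909.00363 — 6 statements merged into one kernel-verified Lean document; each statement's English description precedes it below -/
import Mathlib

section
/- For any probability space (Ω, Σ, μ) and any measurable non-negative function f ∈ L¹(μ), the entropy Ent_μ(f) = ∫ f log f dμ − (∫ f dμ) log(∫ f dμ) satisfies the duality formula Ent_μ(f) = sup { ∫ f g dμ : g measurable, bounded above and below, with ∫ e^g dμ ≤ 1 }. -/
open MeasureTheory
open scoped Classical

open Filter

/-- Young-type inequality: `a b ≤ a log a - a + e^b` for `a ≥ 0`. -/
lemma young_ineq (a b : ℝ) (ha : 0 ≤ a) :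
    a * b ≤ a * Real.log a - a + Real.exp b := by
  rcases eq_or_lt_of_le ha with h | h
  · simp only [← h, zero_mul, sub_zero, zero_sub, neg_zero, zero_add]
    positivity
  · have h1 : (b - Real.log a) + 1 ≤ Real.exp (b - Real.log a) := Real.add_one_le_exp _
    have h2 : Real.exp (b - Real.log a) = Real.exp b / a := by
      rw [Real.exp_sub, Real.exp_log h]
    have h3 := mul_le_mul_of_nonneg_left h1 h.le
    rw [h2, mul_div_cancel₀ _ h.ne'] at h3
    nlinarith

/-- `x (log m - log x) ≤ m e⁻¹` for `0 < x`, `0 < m`. -/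
lemma neg_part_bound' {m x : ℝ} (hm : 0 < m) (hx : 0 < x) :
    x * (Real.log m - Real.log x) ≤ m * Real.exp (-1) := by
  have h1 : Real.log m - Real.log x = Real.log (m / (Real.exp 1 * x)) + 1 := by
    rw [Real.log_div (by positivity) (by positivity),
      Real.log_mul (by positivity) hx.ne', Real.log_exp]
    ring
  have h2 : Real.log (m / (Real.exp 1 * x)) ≤ m / (Real.exp 1 * x) - 1 :=
    Real.log_le_sub_one_of_pos (by positivity)
  have h3 : x * (m / (Real.exp 1 * x)) = m * Real.exp (-1) := by
    rw [Real.exp_neg]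
    field_simp
  calc x * (Real.log m - Real.log x) = x * (Real.log (m / (Real.exp 1 * x)) + 1) := by rw [h1]
    _ ≤ x * (m / (Real.exp 1 * x) - 1 + 1) := by nlinarith
    _ = m * Real.exp (-1) := by rw [← h3]; ring

/-- Splitting a two-sided clamp into positive and negative truncated parts. -/
lemma clamp_split' (t n : ℝ) (hn : 0 ≤ n) :
    min (max t (-n)) n = min (max t 0) n - min (max (-t) 0) n := by
  rcases le_total t 0 with h | h
  · rw [max_eq_right h, min_eq_left hn, max_eq_left (neg_nonneg.2 h)]
    rcases le_total (-n) t with h2 | h2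
    · rw [max_eq_left h2, min_eq_left (h.trans hn), min_eq_left (by linarith)]; ring
    · rw [max_eq_right h2, min_eq_left (by linarith), min_eq_right (by linarith)]; ring
  · rw [max_eq_left h, max_eq_right (neg_nonpos.2 h), min_eq_left hn,
      max_eq_left (by linarith : -n ≤ t)]
    ring

lemma clamp_abs_le (t n : ℝ) (hn : 0 ≤ n) : |min (max t (-n)) n| ≤ |t| := by
  refine abs_le.2 ⟨le_min (le_trans (neg_abs_le t) (le_max_left _ _))
    (le_trans (by simpa using abs_nonneg t) hn), ?_⟩
  refine le_trans (min_le_left _ _) (max_le (le_abs_self t) ?_)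
  have := abs_nonneg t
  linarith

lemma tendsto_log_one_add_exp_neg :
    Tendsto (fun n : ℕ => Real.log (1 + Real.exp (-(n:ℝ)))) atTop (nhds 0) := by
  have h1 : Tendsto (fun n : ℕ => Real.exp (-(n:ℝ))) atTop (nhds 0) :=
    Real.tendsto_exp_neg_atTop_nhds_zero.comp tendsto_natCast_atTop_atTop
  have h2 : Tendsto (fun n : ℕ => 1 + Real.exp (-(n:ℝ))) atTop (nhds 1) := by
    simpa using tendsto_const_nhds.add h1
  have h3 := ((Real.continuousAt_log (by norm_num : (1:ℝ) ≠ 0)).tendsto).comp h2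
  simpa [Function.comp_def] using h3

/-- The upper bound direction: any admissible test function `g` gives
`∫ f g ≤ ∫ f log f - (∫ f) log (∫ f)`. -/
lemma integral_mul_le_entropy {Ω : Type*} [MeasurableSpace Ω] (μ : Measure Ω)
    [IsProbabilityMeasure μ]
    (f : Ω → ℝ) (hf0 : ∀ x, 0 ≤ f x) (hfi : Integrable f μ)
    (hm : 0 < ∫ x, f x ∂μ)
    (hInt : Integrable (fun x => f x * Real.log (f x)) μ)
    (g : Ω → ℝ) (hg : Measurable g) (c C : ℝ) (hb : ∀ x, c ≤ g x ∧ g x ≤ C)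
    (hexp : (∫ x, Real.exp (g x) ∂μ) ≤ 1) :
    ∫ x, f x * g x ∂μ ≤
      (∫ x, f x * Real.log (f x) ∂μ) - (∫ x, f x ∂μ) * Real.log (∫ x, f x ∂μ) := by
  set m := ∫ x, f x ∂μ with hm_def
  have hmne : m ≠ 0 := hm.ne'
  have hgb : ∃ B, ∀ x, ‖g x‖ ≤ B :=
    ⟨max (-c) C, fun x => abs_le.2 ⟨by
      have h1 := (hb x).1
      have h2 := le_max_left (-c) C
      linarith, le_trans (hb x).2 (le_max_right _ _)⟩⟩
  have hfg : Integrable (fun x => f x * g x) μ := by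
    have h := hfi.bdd_mul hg.aestronglyMeasurable (ae_of_all _ hgb.choose_spec)
    simpa [mul_comm] using h
  have hexpg : Integrable (fun x => Real.exp (g x)) μ := by
    refine Integrable.mono' (integrable_const (Real.exp C)) hg.exp.aestronglyMeasurable ?_
    refine ae_of_all _ fun x => ?_
    rw [Real.norm_eq_abs, abs_of_pos (Real.exp_pos _)]
    exact Real.exp_le_exp.2 (hb x).2
  have hRHS : Integrable
      (fun x => (f x * Real.log (f x) - f x * Real.log m) - f x + m * Real.exp (g x)) μ :=
    ((hInt.sub (hfi.mul_const _)).sub hfi).add (hexpg.const_mul m)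
  have hpt : ∀ x, f x * g x ≤
      (f x * Real.log (f x) - f x * Real.log m) - f x + m * Real.exp (g x) := by
    intro x
    have h := young_ineq (f x / m) (g x) (div_nonneg (hf0 x) hm.le)
    have hid : f x * Real.log (f x / m) = f x * Real.log (f x) - f x * Real.log m := by
      rcases eq_or_lt_of_le (hf0 x) with h0 | h0
      · simp [← h0]
      · rw [Real.log_div h0.ne' hmne]; ring
    calc f x * g x = m * (f x / m * g x) := by field_simp
      _ ≤ m * (f x / m * Real.log (f x / m) - f x / m + Real.exp (g x)) :=
          mul_le_mul_of_nonneg_left h hm.le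
      _ = f x * Real.log (f x / m) - f x + m * Real.exp (g x) := by field_simp
      _ = (f x * Real.log (f x) - f x * Real.log m) - f x + m * Real.exp (g x) := by rw [hid]
  have h1 := integral_mono hfg hRHS hpt
  have hA : Integrable (fun x => f x * Real.log (f x) - f x * Real.log m) μ :=
    hInt.sub (hfi.mul_const _)
  have hB : Integrable (fun x => f x * Real.log (f x) - f x * Real.log m - f x) μ :=
    hA.sub hfi
  have hC : Integrable (fun x => f x * Real.log m) μ := hfi.mul_const _
  rw [integral_add hB (hexpg.const_mul m), integral_sub hA hfi,
    integral_sub hInt hC, integral_mul_const, integral_const_mul] at h1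
  have h2 : m * ∫ x, Real.exp (g x) ∂μ ≤ m * 1 := mul_le_mul_of_nonneg_left hexp hm.le
  linarith

/-- Construction of the admissible test function realizing the truncated value. -/
lemma test_fn_exists {Ω : Type*} [MeasurableSpace Ω] (μ : Measure Ω) [IsProbabilityMeasure μ]
    (f : Ω → ℝ) (hf : Measurable f) (hf0 : ∀ x, 0 ≤ f x) (hfi : Integrable f μ)
    (hm : 0 < ∫ y, f y ∂μ) (n : ℕ) :
    ∃ g : Ω → ℝ, Measurable g ∧ (∃ c C : ℝ, ∀ x, c ≤ g x ∧ g x ≤ C) ∧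
      (∫ x, Real.exp (g x) ∂μ) ≤ 1 ∧
      ∫ x, f x * g x ∂μ =
        (∫ x, f x * min (max (Real.log (f x) - Real.log (∫ y, f y ∂μ)) (-(n:ℝ))) (n:ℝ) ∂μ)
          - Real.log (1 + Real.exp (-(n:ℝ))) * (∫ y, f y ∂μ) := by
  set m := ∫ y, f y ∂μ with hm_def
  set c := Real.log (1 + Real.exp (-(n:ℝ))) with hc_def
  set cl : Ω → ℝ := fun x => min (max (Real.log (f x) - Real.log m) (-(n:ℝ))) (n:ℝ) with hcl
  set g0 : Ω → ℝ := fun x => if f x = 0 then -(n:ℝ) else cl x with hg0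
  have hn0 : (0:ℝ) ≤ (n:ℝ) := Nat.cast_nonneg n
  have hcl_meas : Measurable cl :=
    ((hf.log.sub measurable_const).max measurable_const).min measurable_const
  have hg0_meas : Measurable g0 :=
    Measurable.ite (hf (measurableSet_singleton 0)) measurable_const hcl_meas
  have hb : ∀ x, -(n:ℝ) ≤ g0 x ∧ g0 x ≤ (n:ℝ) := by
    intro x
    simp only [hg0]
    by_cases h : f x = 0
    · rw [if_pos h]; exact ⟨le_refl _, by linarith⟩
    · rw [if_neg h]
      exact ⟨le_min (le_max_right _ _) (by linarith), min_le_right _ _⟩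
  have hexp_bd : ∀ x, Real.exp (g0 x) ≤ f x / m + Real.exp (-(n:ℝ)) := by
    intro x
    have hd : 0 ≤ f x / m := div_nonneg (hf0 x) hm.le
    simp only [hg0]
    by_cases h : f x = 0
    · rw [if_pos h]; linarith
    · rw [if_neg h]
      have hfx : 0 < f x := lt_of_le_of_ne (hf0 x) (Ne.symm h)
      have h3 : Real.exp (Real.log (f x) - Real.log m) = f x / m := by
        rw [Real.exp_sub, Real.exp_log hfx, Real.exp_log hm]
      rcases le_total (Real.log (f x) - Real.log m) (-(n:ℝ)) with hh | hh
      · have h1 : cl x ≤ -(n:ℝ) := le_trans (min_le_left _ _) (max_le hh (le_refl _))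
        have := Real.exp_le_exp.2 h1
        linarith
      · have h1 : cl x ≤ Real.log (f x) - Real.log m :=
          le_trans (min_le_left _ _) (by rw [max_eq_left hh])
        have h2 := Real.exp_le_exp.2 h1
        rw [h3] at h2
        have := Real.exp_pos (-(n:ℝ))
        linarith
  have hg0_exp_int : Integrable (fun x => Real.exp (g0 x)) μ := by
    refine Integrable.mono' (integrable_const (Real.exp (n:ℝ)))
      hg0_meas.exp.aestronglyMeasurable (ae_of_all _ fun x => ?_)
    rw [Real.norm_eq_abs, abs_of_pos (Real.exp_pos _)]
    exact Real.exp_le_exp.2 (hb x).2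
  have hint_exp_le : (∫ x, Real.exp (g0 x) ∂μ) ≤ 1 + Real.exp (-(n:ℝ)) := by
    have hrhs : Integrable (fun x => f x / m + Real.exp (-(n:ℝ))) μ :=
      (hfi.div_const m).add (integrable_const _)
    have h := integral_mono hg0_exp_int hrhs hexp_bd
    rw [integral_add (hfi.div_const m) (integrable_const _), integral_div, integral_const] at h
    simp only [probReal_univ, one_smul, ← hm_def] at h
    rwa [div_self hm.ne'] at h
  have hec : Real.exp c = 1 + Real.exp (-(n:ℝ)) := Real.exp_log (by positivity)
  have hc0 : 0 ≤ c := Real.log_nonneg (by have := Real.exp_pos (-(n:ℝ)); linarith)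
  refine ⟨fun x => g0 x - c, hg0_meas.sub measurable_const,
    ⟨-(n:ℝ) - c, (n:ℝ) - c,
      fun x => ⟨sub_le_sub_right (hb x).1 c, sub_le_sub_right (hb x).2 c⟩⟩, ?_, ?_⟩
  · simp only [Real.exp_sub]
    rw [integral_div, div_le_one (Real.exp_pos _), hec]
    exact hint_exp_le
  · have hfg0 : Integrable (fun x => f x * g0 x) μ := by
      have h := hfi.bdd_mul hg0_meas.aestronglyMeasurable
        (ae_of_all _ fun x => abs_le.2 ⟨(hb x).1, (hb x).2⟩)
      simpa [mul_comm] using h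
    have heq : (fun x => f x * g0 x) = fun x => f x * cl x := by
      funext x
      simp only [hg0]
      by_cases h : f x = 0
      · rw [if_pos h, h]; ring
      · rw [if_neg h]
    calc ∫ x, f x * (g0 x - c) ∂μ
        = ∫ x, (f x * g0 x - f x * c) ∂μ := by simp only [mul_sub]
      _ = (∫ x, f x * g0 x ∂μ) - ∫ x, f x * c ∂μ := integral_sub hfg0 (hfi.mul_const c)
      _ = (∫ x, f x * cl x ∂μ) - c * m := by rw [heq, integral_mul_const, ← hm_def, mul_comm]

/-- Convergence of the truncated values to the entropy, in the integrable case. -/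
lemma tendsto_clamp_integral {Ω : Type*} [MeasurableSpace Ω] (μ : Measure Ω)
    [IsProbabilityMeasure μ]
    (f : Ω → ℝ) (hf : Measurable f) (hfi : Integrable f μ)
    (hInt : Integrable (fun x => f x * Real.log (f x)) μ) :
    Tendsto (fun n : ℕ =>
        (∫ x, f x * min (max (Real.log (f x) - Real.log (∫ y, f y ∂μ)) (-(n:ℝ))) (n:ℝ) ∂μ)
          - Real.log (1 + Real.exp (-(n:ℝ))) * (∫ y, f y ∂μ)) atTop
      (nhds ((∫ x, f x * Real.log (f x) ∂μ)
        - (∫ y, f y ∂μ) * Real.log (∫ y, f y ∂μ))) := by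
  set m := ∫ y, f y ∂μ with hm_def
  set t : Ω → ℝ := fun x => Real.log (f x) - Real.log m with ht
  have hti : Integrable (fun x => f x * t x) μ := by
    refine (hInt.sub (hfi.mul_const (Real.log m))).congr (ae_of_all _ fun x => ?_)
    simp only [Pi.sub_apply, ht]; ring
  have hmeas : ∀ n : ℕ, AEStronglyMeasurable
      (fun x => f x * min (max (t x) (-(n:ℝ))) (n:ℝ)) μ :=
    fun n => (hf.mul (((hf.log.sub measurable_const).max measurable_const).min
      measurable_const)).aestronglyMeasurable
  have hbd : ∀ n : ℕ, ∀ᵐ x ∂μ, ‖f x * min (max (t x) (-(n:ℝ))) (n:ℝ)‖ ≤ |f x * t x| := by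
    intro n
    refine ae_of_all _ fun x => ?_
    rw [Real.norm_eq_abs, abs_mul, abs_mul]
    exact mul_le_mul_of_nonneg_left (clamp_abs_le _ _ (Nat.cast_nonneg n)) (abs_nonneg _)
  have hptw : ∀ᵐ x ∂μ, Tendsto (fun n : ℕ => f x * min (max (t x) (-(n:ℝ))) (n:ℝ)) atTop
      (nhds (f x * t x)) := by
    refine ae_of_all _ fun x => ?_
    have hev : (fun n : ℕ => f x * min (max (t x) (-(n:ℝ))) (n:ℝ))
        =ᶠ[atTop] (fun _ => f x * t x) := by
      refine eventually_atTop.2 ⟨⌈|t x|⌉₊, fun n hn => ?_⟩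
      have h1 : |t x| ≤ (n:ℝ) := le_trans (Nat.le_ceil _) (Nat.cast_le.2 hn)
      have h2 : -(n:ℝ) ≤ t x := by have := neg_abs_le (t x); linarith
      simp only []
      rw [max_eq_left h2, min_eq_left (le_trans (le_abs_self _) h1)]
    exact Tendsto.congr' hev.symm tendsto_const_nhds
  have hconv := tendsto_integral_of_dominated_convergence _ hmeas hti.abs hbd hptw
  have hE : ∫ x, f x * t x ∂μ = (∫ x, f x * Real.log (f x) ∂μ) - m * Real.log m := by
    have hid : ∀ x, f x * t x = f x * Real.log (f x) - f x * Real.log m := fun x => by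
      simp only [ht]; ring
    rw [integral_congr_ae (ae_of_all _ hid), integral_sub hInt (hfi.mul_const _),
      integral_mul_const]
  rw [hE] at hconv
  have hc := tendsto_log_one_add_exp_neg.mul_const m
  simpa using hconv.sub hc

/-- In the non-integrable case the truncated values are unbounded. -/
lemma exists_clamp_integral_gt {Ω : Type*} [MeasurableSpace Ω] (μ : Measure Ω)
    [IsProbabilityMeasure μ]
    (f : Ω → ℝ) (hf : Measurable f) (hf0 : ∀ x, 0 ≤ f x) (hfi : Integrable f μ)
    (hm : 0 < ∫ y, f y ∂μ)
    (hNot : ¬ Integrable (fun x => f x * Real.log (f x)) μ) (K : ℝ) :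
    ∃ n : ℕ, K <
        (∫ x, f x * min (max (Real.log (f x) - Real.log (∫ y, f y ∂μ)) (-(n:ℝ))) (n:ℝ) ∂μ)
          - Real.log (1 + Real.exp (-(n:ℝ))) * (∫ y, f y ∂μ) := by
  set m := ∫ y, f y ∂μ with hm_def
  set t : Ω → ℝ := fun x => Real.log (f x) - Real.log m with ht
  have ht_meas : Measurable t := hf.log.sub measurable_const
  set A : Ω → ℝ := fun x => f x * max (t x) 0 with hA
  set Nf : Ω → ℝ := fun x => f x * max (-(t x)) 0 with hNf
  have hA0 : ∀ x, 0 ≤ A x := fun x => mul_nonneg (hf0 x) (le_max_right _ _)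
  have hN0 : ∀ x, 0 ≤ Nf x := fun x => mul_nonneg (hf0 x) (le_max_right _ _)
  have hA_meas : Measurable A := hf.mul (ht_meas.max measurable_const)
  have hN_meas : Measurable Nf := hf.mul (ht_meas.neg.max measurable_const)
  have hNle : ∀ x, Nf x ≤ m * Real.exp (-1) := by
    intro x
    rcases eq_or_lt_of_le (hf0 x) with h0 | h0
    · simp only [hNf, ← h0, zero_mul]
      positivity
    · rcases le_total (-(t x)) 0 with h1 | h1
      · simp only [hNf, max_eq_right h1, mul_zero]
        positivity
      · simp only [hNf, max_eq_left h1]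
        have : f x * -t x = f x * (Real.log m - Real.log (f x)) := by simp only [ht]; ring
        rw [this]
        exact neg_part_bound' hm h0
  have hNint : Integrable Nf μ := by
    refine Integrable.mono' (integrable_const (m * Real.exp (-1)))
      hN_meas.aestronglyMeasurable (ae_of_all _ fun x => ?_)
    rw [Real.norm_eq_abs, abs_of_nonneg (hN0 x)]
    exact hNle x
  have hAnot : ¬ Integrable A μ := by
    intro hAint
    apply hNot
    have h1 : Integrable (fun x => A x - Nf x) μ := hAint.sub hNint
    have h2 : Integrable (fun x => f x * t x) μ := by
      refine h1.congr (ae_of_all _ fun x => ?_)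
      simp only [hA, hNf, ← mul_sub, max_zero_sub_max_neg_zero_eq_self]
    refine (h2.add (hfi.mul_const (Real.log m))).congr (ae_of_all _ fun x => ?_)
    simp only [Pi.add_apply, ht]
    ring
  set P : ℕ → Ω → ℝ := fun n x => f x * min (max (t x) 0) (n:ℝ) with hP
  have hP_meas : ∀ n, Measurable (P n) := fun n =>
    hf.mul ((ht_meas.max measurable_const).min measurable_const)
  have hP0 : ∀ n x, 0 ≤ P n x := fun n x =>
    mul_nonneg (hf0 x) (le_min (le_max_right _ _) (Nat.cast_nonneg n))
  have hPle : ∀ n x, P n x ≤ A x := fun n x =>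
    mul_le_mul_of_nonneg_left (min_le_left _ _) (hf0 x)
  have hPint : ∀ n, Integrable (P n) μ := by
    intro n
    refine Integrable.mono' (hfi.mul_const (n:ℝ))
      (hP_meas n).aestronglyMeasurable (ae_of_all _ fun x => ?_)
    rw [Real.norm_eq_abs, abs_of_nonneg (hP0 n x)]
    exact mul_le_mul_of_nonneg_left (min_le_right _ _) (hf0 x)
  have hsup : ∀ x, (⨆ n : ℕ, ENNReal.ofReal (P n x)) = ENNReal.ofReal (A x) := by
    intro x
    refine le_antisymm (iSup_le fun n => ENNReal.ofReal_le_ofReal (hPle n x)) ?_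
    refine le_iSup_of_le ⌈max (t x) 0⌉₊ (le_of_eq ?_)
    have h1 : max (t x) 0 ≤ (⌈max (t x) 0⌉₊ : ℝ) := Nat.le_ceil _
    simp only [hP, hA, min_eq_left h1]
  have hlin_top : ∫⁻ x, ENNReal.ofReal (A x) ∂μ = ⊤ := by
    by_contra h
    exact hAnot ⟨hA_meas.aestronglyMeasurable,
      (hasFiniteIntegral_iff_ofReal (ae_of_all _ hA0)).2 (lt_top_iff_ne_top.2 h)⟩
  have hmono : Monotone fun (n : ℕ) (x : Ω) => ENNReal.ofReal (P n x) := by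
    intro a b hab x
    refine ENNReal.ofReal_le_ofReal (mul_le_mul_of_nonneg_left
      (min_le_min (le_refl _) (Nat.cast_le.2 hab)) (hf0 x))
  have htop : (⨆ n : ℕ, ∫⁻ x, ENNReal.ofReal (P n x) ∂μ) = ⊤ := by
    rw [← lintegral_iSup (fun n => (hP_meas n).ennreal_ofReal) hmono]
    rw [← hlin_top]
    congr 1
    funext x
    exact hsup x
  set K₀ : ℝ := max (K + m * Real.exp (-1) + Real.log 2 * m) 0 + 1 with hK₀
  have hK₀pos : 0 < K₀ := by positivity
  obtain ⟨n, hn⟩ : ∃ n : ℕ, ENNReal.ofReal K₀ < ∫⁻ x, ENNReal.ofReal (P n x) ∂μ := by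
    rw [← lt_iSup_iff, htop]
    exact ENNReal.ofReal_lt_top
  have hfin : (∫⁻ x, ENNReal.ofReal (P n x) ∂μ) ≠ ⊤ :=
    ((hasFiniteIntegral_iff_ofReal (ae_of_all _ (hP0 n))).1 (hPint n).2).ne
  have hPn_eq : ∫ x, P n x ∂μ = (∫⁻ x, ENNReal.ofReal (P n x) ∂μ).toReal :=
    integral_eq_lintegral_of_nonneg_ae (ae_of_all _ (hP0 n)) (hP_meas n).aestronglyMeasurable
  have hPbig : K₀ < ∫ x, P n x ∂μ := by
    rw [hPn_eq, ← ENNReal.toReal_ofReal hK₀pos.le]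
    exact (ENNReal.toReal_lt_toReal ENNReal.ofReal_ne_top hfin).2 hn
  refine ⟨n, ?_⟩
  set N' : Ω → ℝ := fun x => f x * min (max (-(t x)) 0) (n:ℝ) with hN'
  have hN'_meas : Measurable N' :=
    hf.mul ((ht_meas.neg.max measurable_const).min measurable_const)
  have hN'0 : ∀ x, 0 ≤ N' x := fun x =>
    mul_nonneg (hf0 x) (le_min (le_max_right _ _) (Nat.cast_nonneg n))
  have hN'le : ∀ x, N' x ≤ m * Real.exp (-1) := fun x =>
    le_trans (mul_le_mul_of_nonneg_left (min_le_left _ _) (hf0 x)) (hNle x)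
  have hN'int : Integrable N' μ := by
    refine Integrable.mono' (integrable_const (m * Real.exp (-1)))
      hN'_meas.aestronglyMeasurable (ae_of_all _ fun x => ?_)
    rw [Real.norm_eq_abs, abs_of_nonneg (hN'0 x)]
    exact hN'le x
  have hsplit : ∀ x, f x * min (max (t x) (-(n:ℝ))) (n:ℝ) = P n x - N' x := by
    intro x
    rw [clamp_split' (t x) (n:ℝ) (Nat.cast_nonneg n)]
    simp only [hP, hN']
    ring
  have hIeq : ∫ x, f x * min (max (t x) (-(n:ℝ))) (n:ℝ) ∂μ
      = (∫ x, P n x ∂μ) - ∫ x, N' x ∂μ := by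
    rw [integral_congr_ae (ae_of_all _ hsplit)]
    exact integral_sub (hPint n) hN'int
  have hN'int_le : ∫ x, N' x ∂μ ≤ m * Real.exp (-1) := by
    have h := integral_mono hN'int (integrable_const (m * Real.exp (-1))) hN'le
    simpa [measure_univ] using h
  have hclog : Real.log (1 + Real.exp (-(n:ℝ))) ≤ Real.log 2 := by
    have h1 : Real.exp (-(n:ℝ)) ≤ 1 := by
      rw [← Real.exp_zero]
      exact Real.exp_le_exp.2 (by simp [Nat.cast_nonneg])
    have : (0:ℝ) < 1 + Real.exp (-(n:ℝ)) := by positivity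
    exact Real.log_le_log this (by linarith)
  have hcm : Real.log (1 + Real.exp (-(n:ℝ))) * m ≤ Real.log 2 * m :=
    mul_le_mul_of_nonneg_right hclog hm.le
  have hK₀le : K + m * Real.exp (-1) + Real.log 2 * m < K₀ := by
    have := le_max_left (K + m * Real.exp (-1) + Real.log 2 * m) 0
    simp only [hK₀]
    linarith
  rw [hIeq]
  linarith

/-- The entropy `Ent_μ(f) = ∫ f log f dμ − (∫ f dμ) log(∫ f dμ)`, an extended real number
(equal to `⊤` when `f log f` is not integrable, corresponding to infinite entropy). -/
noncomputable def entropy {Ω : Type*} [MeasurableSpace Ω] (μ : Measure Ω) (f : Ω → ℝ) : EReal :=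
  if Integrable (fun x => f x * Real.log (f x)) μ then
    (((∫ x, f x * Real.log (f x) ∂μ) - (∫ x, f x ∂μ) * Real.log (∫ x, f x ∂μ) : ℝ) : EReal)
  else ⊤

/-- Duality formula for entropy: for a probability space `(Ω, μ)` and a non-negative
`f ∈ L¹(μ)`, `Ent_μ(f) = sup { ∫ f g dμ : g measurable and bounded, ∫ e^g dμ ≤ 1 }`. -/
theorem entropy_duality {Ω : Type*} [MeasurableSpace Ω] (μ : Measure Ω) [IsProbabilityMeasure μ]
    (f : Ω → ℝ) (hf : Measurable f) (hf0 : ∀ x, 0 ≤ f x) (hfi : Integrable f μ) :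
    entropy μ f =
      sSup {r : EReal | ∃ g : Ω → ℝ, Measurable g ∧ (∃ c C : ℝ, ∀ x, c ≤ g x ∧ g x ≤ C) ∧
        (∫ x, Real.exp (g x) ∂μ) ≤ 1 ∧ r = ((∫ x, f x * g x ∂μ : ℝ) : EReal)} := by
  set S : Set EReal := {r : EReal | ∃ g : Ω → ℝ, Measurable g ∧
      (∃ c C : ℝ, ∀ x, c ≤ g x ∧ g x ≤ C) ∧
      (∫ x, Real.exp (g x) ∂μ) ≤ 1 ∧ r = ((∫ x, f x * g x ∂μ : ℝ) : EReal)} with hSdef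
  have h0S : (0 : EReal) ∈ S := by
    refine ⟨0, measurable_const, ⟨0, 0, fun x => ⟨le_refl _, le_refl _⟩⟩, ?_, ?_⟩
    · simp
    · simp
  by_cases hm : (∫ x, f x ∂μ) = 0
  · -- degenerate case : `f = 0` a.e.
    have hfz : f =ᵐ[μ] 0 := (integral_eq_zero_iff_of_nonneg hf0 hfi).1 hm
    have hflz : (fun x => f x * Real.log (f x)) =ᵐ[μ] 0 := by
      filter_upwards [hfz] with x hx
      simp [hx]
    have hIntz : Integrable (fun x => f x * Real.log (f x)) μ :=
      (integrable_zero _ _ _).congr hflz.symm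
    have hint0 : ∫ x, f x * Real.log (f x) ∂μ = 0 := by
      rw [integral_congr_ae hflz]; simp
    have hent : entropy μ f = (0 : EReal) := by
      rw [entropy, if_pos hIntz, hint0, hm]
      norm_num
    rw [hent]
    refine le_antisymm (le_sSup h0S) (sSup_le ?_)
    rintro r ⟨g, hg, hb, hexp, rfl⟩
    have hz : ∫ x, f x * g x ∂μ = 0 := by
      have : (fun x => f x * g x) =ᵐ[μ] 0 := by
        filter_upwards [hfz] with x hx
        simp [hx]
      rw [integral_congr_ae this]; simp
    simp [hz]
  · have hm' : 0 < ∫ x, f x ∂μ := lt_of_le_of_ne (integral_nonneg hf0) (Ne.symm hm)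
    have hmem : ∀ n : ℕ,
        (((∫ x, f x * min (max (Real.log (f x) - Real.log (∫ y, f y ∂μ)) (-(n:ℝ))) (n:ℝ) ∂μ)
          - Real.log (1 + Real.exp (-(n:ℝ))) * (∫ y, f y ∂μ) : ℝ) : EReal) ∈ S := by
      intro n
      obtain ⟨g, hg, hb, hexp, heq⟩ := test_fn_exists μ f hf hf0 hfi hm' n
      exact ⟨g, hg, hb, hexp, by rw [heq]⟩
    refine le_antisymm ?_ (sSup_le ?_)
    · -- entropy ≤ sSup S
      by_cases hInt : Integrable (fun x => f x * Real.log (f x)) μ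
      · rw [entropy, if_pos hInt]
        have hten := tendsto_clamp_integral μ f hf hfi hInt
        have hten' := EReal.tendsto_coe.2 hten
        exact le_of_tendsto' hten' (fun n => le_sSup (hmem n))
      · rw [entropy, if_neg hInt]
        refine le_of_eq (sSup_eq_top.2 ?_).symm
        intro b hb
        induction b using EReal.rec with
        | bot => exact ⟨0, h0S, by simpa using EReal.bot_lt_coe 0⟩
        | coe K =>
          obtain ⟨n, hn⟩ := exists_clamp_integral_gt μ f hf hf0 hfi hm' hInt K
          exact ⟨_, hmem n, EReal.coe_lt_coe_iff.2 hn⟩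
        | top => exact absurd hb (lt_irrefl _)
    · -- sSup S ≤ entropy
      rintro r ⟨g, hg, ⟨c, C, hb⟩, hexp, rfl⟩
      by_cases hInt : Integrable (fun x => f x * Real.log (f x)) μ
      · rw [entropy, if_pos hInt]
        exact EReal.coe_le_coe_iff.2
          (integral_mul_le_entropy μ f hf0 hfi hm' hInt g hg c C hb hexp)
      · rw [entropy, if_neg hInt]
        exact le_top
end

section
/- (Tensorization of entropy.) Let (Ω_i, Σ_i, μ_i), i = 1, …, n, be probability spaces and let P = μ_1 ⊗ ⋯ ⊗ μ_n be the product probability measure on X = Ω_1 × ⋯ × Ω_n. For every non-negative function f on X in L¹(P), Ent_P(f) ≤ Σ_{i=1}^n ∫_X Ent_{μ_i}(f_i) dP, where for each i and each x ∈ X, f_i is the function on Ω_i given by f_i(x_i) = f(x_1, …, x_{i−1}, x_i, x_{i+1}, …, x_n) with the other coordinates fixed, and the integration in dP is over the remaining coordinates. -/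
open MeasureTheory
open scoped Classical ENNReal

/-- The canonical map from `EReal` to `ℝ≥0∞` (sending `⊤` to `⊤` and negative values to `0`). -/
noncomputable def erealToENNReal (x : EReal) : ℝ≥0∞ :=
  if x = ⊤ then ⊤ else ENNReal.ofReal x.toReal

namespace EntTensor

noncomputable def phi (m u : ℝ) : ℝ := u * Real.log u - u * Real.log m - u + m

lemma phi_zero_right (m : ℝ) : phi m 0 = m := by simp [phi]

lemma phi_nonneg {m u : ℝ} (hm : 0 < m) (hu : 0 ≤ u) : 0 ≤ phi m u := by
  rcases eq_or_lt_of_le hu with h | h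
  · simp [phi, ← h]; positivity
  · have h1 : Real.log (m / u) ≤ m / u - 1 := Real.log_le_sub_one_of_pos (by positivity)
    have h2 : Real.log (m / u) = Real.log m - Real.log u := Real.log_div hm.ne' h.ne'
    have := mul_le_mul_of_nonneg_left (h2 ▸ h1) h.le
    have hmu : u * (m / u) = m := by field_simp
    unfold phi; nlinarith [this]

lemma young {m' u : ℝ} (hu : 0 ≤ u) (hm' : 0 ≤ m') (h : u ≠ 0 → 0 < m') (v : ℝ) :
    u * v ≤ phi m' u - m' + m' * Real.exp v := by
  rcases eq_or_lt_of_le hu with h0 | h0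
  · simp [phi, ← h0]; positivity
  · have hm : 0 < m' := h h0.ne'
    set w := v - Real.log u + Real.log m' with hw
    have hexp : m' * Real.exp v = u * Real.exp w := by
      rw [hw, Real.exp_add, Real.exp_sub, Real.exp_log h0, Real.exp_log hm]
      field_simp
    have key : w + 1 ≤ Real.exp w := Real.add_one_le_exp w
    have := mul_le_mul_of_nonneg_left key h0.le
    unfold phi
    rw [hexp]
    nlinarith [this]

-- u log u - u + 1 >= 0, i.e. phi 1 u >= 0; also f log f = phi m f + f log m + f - m
lemma mul_log_eq (m u : ℝ) : u * Real.log u = phi m u + u * Real.log m + u - m := by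
  unfold phi; ring

-- u ≤ u log u + 1 for u ≥ 0
lemma le_mul_log_add_one {u : ℝ} (hu : 0 ≤ u) : u ≤ u * Real.log u + 1 := by
  have := phi_nonneg one_pos hu
  simp [phi] at this
  linarith

-- u ≤ (u log u - u) + (e^2 + 1) for u ≥ 0
lemma le_mul_log_sub_add {u : ℝ} (hu : 0 ≤ u) : u ≤ (u * Real.log u - u) + (Real.exp 2 + 1) := by
  have h1 : 0 ≤ u * Real.log u - u + 1 := by have := phi_nonneg one_pos hu; simpa [phi] using this
  rcases le_or_gt u (Real.exp 2) with h | h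
  · linarith
  · have hlog : (2:ℝ) ≤ Real.log u := by
      rw [← Real.log_exp 2]
      exact Real.log_le_log (Real.exp_pos 2) h.le
    have h2 : u * 2 ≤ u * Real.log u := mul_le_mul_of_nonneg_left hlog hu
    linarith [Real.exp_pos 2]

lemma phi_zero_left (u : ℝ) : phi 0 u = u * Real.log u - u := by simp [phi]

lemma measurable_phi : Measurable fun p : ℝ × ℝ => phi p.1 p.2 := by
  unfold phi
  exact (((measurable_snd.mul (Real.measurable_log.comp measurable_snd)).sub (measurable_snd.mul (Real.measurable_log.comp measurable_fst))).sub measurable_snd).add measurable_fst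


noncomputable def entE {Ω : Type*} [MeasurableSpace Ω] (μ : Measure Ω) (f : Ω → ℝ) : ℝ≥0∞ :=
  ∫⁻ x, ENNReal.ofReal (phi (∫ z, f z ∂μ) (f x)) ∂μ

lemma erealToENNReal_coe (r : ℝ) : erealToENNReal (r : EReal) = ENNReal.ofReal r := by
  simp [erealToENNReal]

lemma erealToENNReal_top : erealToENNReal ⊤ = ⊤ := by simp [erealToENNReal]

lemma self_le_coe_erealToENNReal (x : EReal) : x ≤ ((erealToENNReal x : ℝ≥0∞) : EReal) := by
  induction x using EReal.rec with
  | bot => exact bot_le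
  | coe r =>
      rw [erealToENNReal_coe, EReal.coe_ennreal_ofReal]
      exact EReal.coe_le_coe_iff.mpr (le_max_left r 0)
  | top => rw [erealToENNReal_top]; simp

variable {Ω : Type*} [MeasurableSpace Ω] {μ : Measure Ω}

lemma measurable_phi_comp {g : Ω → ℝ} (hg : Measurable g) (m : ℝ) :
    Measurable fun x => phi m (g x) :=
  measurable_phi.comp (measurable_const.prodMk hg)

lemma integrable_of_ofReal_lintegral_ne_top {g : Ω → ℝ} (hg : Measurable g)
    (h0 : ∀ᵐ x ∂μ, 0 ≤ g x) (h : ∫⁻ x, ENNReal.ofReal (g x) ∂μ ≠ ⊤) : Integrable g μ := by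
  have h1 := integrable_toReal_of_lintegral_ne_top (hg.ennreal_ofReal.aemeasurable) h
  exact h1.congr (h0.mono fun x hx => by simp [ENNReal.toReal_ofReal hx])

lemma integrable_of_mul_log {g : Ω → ℝ} [IsFiniteMeasure μ] (hg : Measurable g)
    (h0 : ∀ x, 0 ≤ g x) (hint : Integrable (fun x => g x * Real.log (g x)) μ) :
    Integrable g μ := by
  refine Integrable.mono' (hint.add (integrable_const 1)) hg.aestronglyMeasurable
    (ae_of_all _ fun x => ?_)
  rw [Real.norm_of_nonneg (h0 x)]
  exact le_mul_log_add_one (h0 x)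

lemma phi_integrable {g : Ω → ℝ} [IsFiniteMeasure μ]
    (hgi : Integrable g μ) (hint : Integrable (fun x => g x * Real.log (g x)) μ) (m : ℝ) :
    Integrable (fun x => phi m (g x)) μ := by
  unfold phi
  exact (((hint.sub (hgi.mul_const (Real.log m))).sub hgi).add (integrable_const m))

lemma integral_phi {g : Ω → ℝ} [IsProbabilityMeasure μ]
    (hgi : Integrable g μ) (hint : Integrable (fun x => g x * Real.log (g x)) μ) :
    ∫ x, phi (∫ z, g z ∂μ) (g x) ∂μ
      = (∫ x, g x * Real.log (g x) ∂μ) - (∫ z, g z ∂μ) * Real.log (∫ z, g z ∂μ) := by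
  set m := ∫ z, g z ∂μ with hm
  have e1 : ∫ x, g x * Real.log m ∂μ = m * Real.log m := by
    rw [integral_mul_const]
  have ia : Integrable (fun x => g x * Real.log (g x) - g x * Real.log m) μ :=
    hint.sub (hgi.mul_const _)
  have ib : Integrable (fun x => g x * Real.log (g x) - g x * Real.log m - g x) μ := ia.sub hgi
  have h3 : ∫ x, g x * Real.log (g x) - g x * Real.log m ∂μ
      = (∫ x, g x * Real.log (g x) ∂μ) - m * Real.log m := by
    rw [integral_sub hint (hgi.mul_const _), e1]
  have h4 : ∫ x, g x * Real.log (g x) - g x * Real.log m - g x ∂μ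
      = (∫ x, g x * Real.log (g x) ∂μ) - m * Real.log m - m := by
    rw [integral_sub ia hgi, h3, ← hm]
  have h5 : ∫ x, g x * Real.log (g x) - g x * Real.log m - g x + m ∂μ
      = (∫ x, g x * Real.log (g x) ∂μ) - m * Real.log m := by
    rw [integral_add ib (integrable_const m), h4]
    simp
  simp only [phi]
  rw [← hm] at *
  exact h5

lemma erealToENNReal_entropy [IsProbabilityMeasure μ] {g : Ω → ℝ} (hg : Measurable g)
    (h0 : ∀ x, 0 ≤ g x) : erealToENNReal (entropy μ g) = entE μ g := by
  by_cases hint : Integrable (fun x => g x * Real.log (g x)) μ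
  · have hgi : Integrable g μ := integrable_of_mul_log hg h0 hint
    set m := ∫ z, g z ∂μ with hm
    have hm0 : 0 ≤ m := integral_nonneg h0
    rw [entropy, if_pos hint, erealToENNReal_coe]
    rcases eq_or_lt_of_le hm0 with hme | hmp
    · have hg0 : g =ᵐ[μ] 0 :=
        (integral_eq_zero_iff_of_nonneg_ae (ae_of_all _ h0) hgi).mp (by rw [← hm, ← hme])
      have hggl0 : (fun x => g x * Real.log (g x)) =ᵐ[μ] 0 :=
        hg0.mono fun x hx => by simp only [Pi.zero_apply] at hx ⊢; simp [hx]
      have i1 : ∫ x, g x * Real.log (g x) ∂μ = 0 := by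
        rw [integral_congr_ae hggl0]; simp
      rw [i1, ← hm, ← hme]
      have : entE μ g = 0 := by
        rw [entE, ← hm, ← hme]
        rw [lintegral_congr_ae (hg0.mono fun x hx => ?_), lintegral_zero]
        simp only [Pi.zero_apply] at hx
        rw [hx, phi_zero_right]
        simp
      rw [this]
      simp
    · have hphi := phi_integrable hgi hint m
      have hnn : 0 ≤ᵐ[μ] fun x => phi m (g x) := ae_of_all _ fun x => phi_nonneg hmp (h0 x)
      rw [entE, ← hm, ← ofReal_integral_eq_lintegral_ofReal hphi hnn, integral_phi hgi hint, ← hm]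
  · rw [entropy, if_neg hint, erealToENNReal_top]
    by_contra hfin
    have hfin' : entE μ g ≠ ⊤ := fun h => hfin (h ▸ rfl)
    by_cases hgi : Integrable g μ
    · set m := ∫ z, g z ∂μ with hm
      have hm0 : 0 ≤ m := integral_nonneg h0
      rcases eq_or_lt_of_le hm0 with hme | hmp
      · have hg0 : g =ᵐ[μ] 0 :=
          (integral_eq_zero_iff_of_nonneg_ae (ae_of_all _ h0) hgi).mp (by rw [← hm, ← hme])
        refine hint ((integrable_zero _ _ _).congr (Filter.EventuallyEq.symm ?_))
        exact hg0.mono fun x hx => by simp only [Pi.zero_apply] at hx ⊢; simp [hx]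
      · have hE : entE μ g = ∫⁻ x, ENNReal.ofReal (phi m (g x)) ∂μ := by rw [entE, ← hm]
        have hphi : Integrable (fun x => phi m (g x)) μ :=
          integrable_of_ofReal_lintegral_ne_top (measurable_phi_comp hg m)
            (ae_of_all _ fun x => phi_nonneg hmp (h0 x)) (by rw [← hE]; exact hfin')
        refine hint ?_
        have : (fun x => g x * Real.log (g x))
            = fun x => phi m (g x) + g x * Real.log m + g x - m := by
          funext x; exact mul_log_eq m (g x)
        rw [this]
        exact ((hphi.add (hgi.mul_const _)).add hgi).sub (integrable_const m)
    · have hm' : ∫ z, g z ∂μ = 0 := integral_undef hgi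
      have hE : entE μ g = ∫⁻ x, ENNReal.ofReal (phi 0 (g x)) ∂μ := by rw [entE, hm']
      have key : ∀ x, ENNReal.ofReal (g x)
          ≤ ENNReal.ofReal (phi 0 (g x)) + ENNReal.ofReal (Real.exp 2 + 1) := fun x => by
        refine le_trans (ENNReal.ofReal_le_ofReal ?_) (ENNReal.ofReal_add_le)
        rw [phi_zero_left]
        exact le_mul_log_sub_add (h0 x)
      have hle : ∫⁻ x, ENNReal.ofReal (g x) ∂μ
          ≤ entE μ g + ENNReal.ofReal (Real.exp 2 + 1) := by
        calc ∫⁻ x, ENNReal.ofReal (g x) ∂μ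
            ≤ ∫⁻ x, ENNReal.ofReal (phi 0 (g x)) + ENNReal.ofReal (Real.exp 2 + 1) ∂μ :=
              lintegral_mono key
          _ = (∫⁻ x, ENNReal.ofReal (phi 0 (g x)) ∂μ) + ENNReal.ofReal (Real.exp 2 + 1) := by
              rw [lintegral_add_right _ measurable_const, lintegral_const, measure_univ, mul_one]
          _ = entE μ g + ENNReal.ofReal (Real.exp 2 + 1) := by rw [hE]
      refine hgi (integrable_of_ofReal_lintegral_ne_top hg (ae_of_all _ h0) ?_)
      intro htop
      rw [htop] at hle
      have : entE μ g + ENNReal.ofReal (Real.exp 2 + 1) ≠ ⊤ :=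
        ENNReal.add_ne_top.mpr ⟨hfin', ENNReal.ofReal_ne_top⟩
      exact this (top_le_iff.mp hle)


lemma entE_zero {g : Ω → ℝ} (hg0 : g =ᵐ[μ] 0) : entE μ g = 0 := by
  have h1 : ∫ z, g z ∂μ = 0 := integral_eq_zero_of_ae hg0
  rw [entE, h1, lintegral_congr_ae (hg0.mono fun x hx => ?_), lintegral_zero]
  simp only [Pi.zero_apply] at hx
  rw [hx, phi_zero_right]
  simp

section Prod

variable {A B : Type*} [MeasurableSpace A] [MeasurableSpace B]

lemma ae_marginal_zero {μ : Measure A} {ν : Measure B} [SFinite μ] [SFinite ν]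
    {f : A × B → ℝ} (hf : Measurable f) (h0 : ∀ p, 0 ≤ f p)
    (hfi : Integrable f (μ.prod ν)) :
    ∀ᵐ p ∂μ.prod ν, (∫ y, f (p.1, y) ∂ν) = 0 → f p = 0 := by
  have hFm : Measurable fun x => ∫ y, f (x, y) ∂ν :=
    hf.stronglyMeasurable.integral_prod_right'.measurable
  have hs : MeasurableSet {p : A × B | (∫ y, f (p.1, y) ∂ν) = 0 ∧ f p ≠ 0} := by
    refine ((hFm.comp measurable_fst) (measurableSet_singleton 0)).inter ?_
    exact (hf (measurableSet_singleton 0)).compl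
  have hnull : (μ.prod ν) {p : A × B | (∫ y, f (p.1, y) ∂ν) = 0 ∧ f p ≠ 0} = 0 := by
    rw [Measure.measure_prod_null hs]
    filter_upwards [hfi.prod_right_ae] with x hx
    by_cases hFx : (∫ y, f (x, y) ∂ν) = 0
    · have hae : ∀ᵐ y ∂ν, f (x, y) = 0 := by
        have h2 := (integral_eq_zero_iff_of_nonneg_ae
          (ae_of_all _ fun y => h0 (x, y)) hx).mp hFx
        filter_upwards [h2] with y hy using hy
      have hz : ν {y | ¬ f (x, y) = 0} = 0 := hae
      refine measure_mono_null ?_ hz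
      intro y hy
      exact hy.2
    · have he : Prod.mk x ⁻¹' {p : A × B | (∫ y, f (p.1, y) ∂ν) = 0 ∧ f p ≠ 0} = ∅ := by
        ext y; simp [hFx]
      simp [he]
  rw [ae_iff]
  convert hnull using 2
  ext p
  simp [Classical.not_imp]

lemma ae_prod_swap {μ : Measure A} {ν : Measure B} [SFinite μ] [SFinite ν]
    {p : A × B → Prop} (h : ∀ᵐ q ∂μ.prod ν, p q) :
    ∀ᵐ q ∂ν.prod μ, p (q.2, q.1) := by
  have h2 : μ.prod ν = Measure.map Prod.swap (ν.prod μ) := Measure.prod_swap.symm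
  rw [h2] at h
  have := ae_of_ae_map (measurable_swap.aemeasurable) h
  filter_upwards [this] with q hq using hq

lemma ae_marginal_zero' {μ : Measure A} {ν : Measure B} [SFinite μ] [SFinite ν]
    {f : A × B → ℝ} (hf : Measurable f) (h0 : ∀ p, 0 ≤ f p)
    (hfi : Integrable f (μ.prod ν)) :
    ∀ᵐ p ∂μ.prod ν, (∫ x, f (x, p.2) ∂μ) = 0 → f p = 0 := by
  have h := ae_marginal_zero (μ := ν) (ν := μ) (f := fun q : B × A => f (q.2, q.1))
    (hf.comp measurable_swap) (fun q => h0 _) (by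
      have := hfi.swap
      exact this)
  have h2 := ae_prod_swap (μ := ν) (ν := μ) h
  filter_upwards [h2] with q hq using hq

lemma lintegral_entE_right (μ : Measure A) (ν : Measure B) [SFinite μ] [SFinite ν]
    {f : A × B → ℝ} (hf : Measurable f) :
    ∫⁻ x, entE ν (fun y => f (x, y)) ∂μ
      = ∫⁻ p : A × B, ENNReal.ofReal (phi (∫ y, f (p.1, y) ∂ν) (f p)) ∂(μ.prod ν) := by
  have h1 : Measurable fun p : A × B => phi (∫ y, f (p.1, y) ∂ν) (f p) :=
    measurable_phi.comp
      (((hf.stronglyMeasurable.integral_prod_right'.measurable).comp measurable_fst).prodMk hf)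
  rw [lintegral_prod _ h1.ennreal_ofReal.aemeasurable]
  rfl

lemma lintegral_entE_left (μ : Measure A) (ν : Measure B) [SFinite μ] [SFinite ν]
    {f : A × B → ℝ} (hf : Measurable f) :
    ∫⁻ y, entE μ (fun x => f (x, y)) ∂ν
      = ∫⁻ p : A × B, ENNReal.ofReal (phi (∫ x, f (x, p.2) ∂μ) (f p)) ∂(μ.prod ν) := by
  have h1 : Measurable fun p : A × B => phi (∫ x, f (x, p.2) ∂μ) (f p) :=
    measurable_phi.comp
      (((hf.stronglyMeasurable.integral_prod_left'.measurable).comp measurable_snd).prodMk hf)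
  rw [lintegral_prod_symm _ h1.ennreal_ofReal.aemeasurable]
  rfl


lemma Bmain (μ : Measure A) (ν : Measure B) [IsProbabilityMeasure μ] [IsProbabilityMeasure ν]
    {f : A × B → ℝ} (hf : Measurable f) (h0 : ∀ p, 0 ≤ f p)
    (hfi : Integrable f (μ.prod ν)) :
    entE (μ.prod ν) f
      ≤ (∫⁻ y, entE μ (fun x => f (x, y)) ∂ν) + ∫⁻ x, entE ν (fun y => f (x, y)) ∂μ := by
  have hFm : Measurable fun x : A => ∫ y, f (x, y) ∂ν :=
    hf.stronglyMeasurable.integral_prod_right'.measurable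
  have hGm : Measurable fun y : B => ∫ x, f (x, y) ∂μ :=
    hf.stronglyMeasurable.integral_prod_left'.measurable
  have hF0 : ∀ x, 0 ≤ ∫ y, f (x, y) ∂ν := fun x => integral_nonneg fun y => h0 (x, y)
  have hG0 : ∀ y, 0 ≤ ∫ x, f (x, y) ∂μ := fun y => integral_nonneg fun x => h0 (x, y)
  have hFi : Integrable (fun x => ∫ y, f (x, y) ∂ν) μ := hfi.integral_prod_left
  have hGi : Integrable (fun y => ∫ x, f (x, y) ∂μ) ν := hfi.integral_prod_right
  set m : ℝ := ∫ p, f p ∂(μ.prod ν) with hm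
  have hm0 : 0 ≤ m := integral_nonneg h0
  have hmF : ∫ x, (∫ y, f (x, y) ∂ν) ∂μ = m := (integral_prod f hfi).symm
  have hmG : ∫ y, (∫ x, f (x, y) ∂μ) ∂ν = m := (integral_prod_symm f hfi).symm
  rcases eq_or_lt_of_le hm0 with hme | hmp
  · have hf0' : f =ᵐ[μ.prod ν] 0 :=
      (integral_eq_zero_iff_of_nonneg_ae (ae_of_all _ h0) hfi).mp (by rw [← hm, ← hme])
    rw [entE_zero hf0']
    exact zero_le
  by_cases hR1 : (∫⁻ y, entE μ (fun x => f (x, y)) ∂ν) = ⊤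
  · rw [hR1, top_add]; exact le_top
  by_cases hR2 : (∫⁻ x, entE ν (fun y => f (x, y)) ∂μ) = ⊤
  · rw [hR2, add_top]; exact le_top
  have haeF : ∀ᵐ p ∂μ.prod ν, (∫ y, f (p.1, y) ∂ν) = 0 → f p = 0 :=
    ae_marginal_zero hf h0 hfi
  have haeG : ∀ᵐ p ∂μ.prod ν, (∫ x, f (x, p.2) ∂μ) = 0 → f p = 0 :=
    ae_marginal_zero' hf h0 hfi
  -- Φ2
  have hΦ2m : Measurable fun p : A × B => phi (∫ y, f (p.1, y) ∂ν) (f p) :=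
    measurable_phi.comp ((hFm.comp measurable_fst).prodMk hf)
  have hΦ2nn : 0 ≤ᵐ[μ.prod ν] fun p : A × B => phi (∫ y, f (p.1, y) ∂ν) (f p) := by
    filter_upwards [haeF] with p hp
    by_cases hFp : (∫ y, f (p.1, y) ∂ν) = 0
    · rw [hFp, hp hFp, phi_zero_right]; exact le_rfl
    · exact phi_nonneg ((hF0 p.1).lt_of_ne (Ne.symm hFp)) (h0 p)
  have hRHS2 := lintegral_entE_right μ ν hf
  have hΦ2fin : (∫⁻ p : A × B, ENNReal.ofReal (phi (∫ y, f (p.1, y) ∂ν) (f p)) ∂(μ.prod ν)) ≠ ⊤ := by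
    rw [← hRHS2]; exact hR2
  have hΦ2i : Integrable (fun p : A × B => phi (∫ y, f (p.1, y) ∂ν) (f p)) (μ.prod ν) :=
    integrable_of_ofReal_lintegral_ne_top hΦ2m hΦ2nn hΦ2fin
  have hR2val : (∫⁻ x, entE ν (fun y => f (x, y)) ∂μ)
      = ENNReal.ofReal (∫ p, phi (∫ y, f (p.1, y) ∂ν) (f p) ∂(μ.prod ν)) := by
    rw [hRHS2, ← ofReal_integral_eq_lintegral_ofReal hΦ2i hΦ2nn]
  -- Φ1
  have hΦ1m : Measurable fun p : A × B => phi (∫ x, f (x, p.2) ∂μ) (f p) :=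
    measurable_phi.comp ((hGm.comp measurable_snd).prodMk hf)
  have hΦ1nn : 0 ≤ᵐ[μ.prod ν] fun p : A × B => phi (∫ x, f (x, p.2) ∂μ) (f p) := by
    filter_upwards [haeG] with p hp
    by_cases hGp : (∫ x, f (x, p.2) ∂μ) = 0
    · rw [hGp, hp hGp, phi_zero_right]; exact le_rfl
    · exact phi_nonneg ((hG0 p.2).lt_of_ne (Ne.symm hGp)) (h0 p)
  have hRHS1 := lintegral_entE_left μ ν hf
  have hΦ1fin : (∫⁻ p : A × B, ENNReal.ofReal (phi (∫ x, f (x, p.2) ∂μ) (f p)) ∂(μ.prod ν)) ≠ ⊤ := by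
    rw [← hRHS1]; exact hR1
  have hΦ1i : Integrable (fun p : A × B => phi (∫ x, f (x, p.2) ∂μ) (f p)) (μ.prod ν) :=
    integrable_of_ofReal_lintegral_ne_top hΦ1m hΦ1nn hΦ1fin
  have hR1val : (∫⁻ y, entE μ (fun x => f (x, y)) ∂ν)
      = ENNReal.ofReal (∫ p, phi (∫ x, f (x, p.2) ∂μ) (f p) ∂(μ.prod ν)) := by
    rw [hRHS1, ← ofReal_integral_eq_lintegral_ofReal hΦ1i hΦ1nn]
  -- pointwise split of phi m (f p)
  have hsplitptw : ∀ p : A × B, phi m (f p)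
      = phi (∫ y, f (p.1, y) ∂ν) (f p)
        + (f p * (Real.log (∫ y, f (p.1, y) ∂ν) - Real.log m) + (m - ∫ y, f (p.1, y) ∂ν)) := by
    intro p; unfold phi; ring
  -- Young a.e. bound in ENNReal, for finiteness
  have hyoung : ∀ᵐ p ∂μ.prod ν,
      ENNReal.ofReal (f p * (Real.log (∫ y, f (p.1, y) ∂ν) - Real.log m))
        ≤ ENNReal.ofReal (phi (∫ x, f (x, p.2) ∂μ) (f p))
          + ENNReal.ofReal ((∫ x, f (x, p.2) ∂μ) * ((∫ y, f (p.1, y) ∂ν) / m)) := by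
    filter_upwards [haeF, haeG] with p hpF hpG
    by_cases hfp : f p = 0
    · rw [hfp, zero_mul]
      simp
    · have hFp : 0 < ∫ y, f (p.1, y) ∂ν :=
        (hF0 p.1).lt_of_ne fun h => hfp (hpF h.symm)
      have hGp : 0 < ∫ x, f (x, p.2) ∂μ :=
        (hG0 p.2).lt_of_ne fun h => hfp (hpG h.symm)
      have hY := young (h0 p) (hG0 p.2) (fun _ => hGp)
        (Real.log (∫ y, f (p.1, y) ∂ν) - Real.log m)
      rw [Real.exp_sub, Real.exp_log hFp, Real.exp_log hmp] at hY
      refine le_trans (ENNReal.ofReal_le_ofReal ?_) ENNReal.ofReal_add_le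
      have : 0 < ∫ x, f (x, p.2) ∂μ := hGp
      nlinarith [hY]
  have hGFfin : (∫⁻ p : A × B,
      ENNReal.ofReal ((∫ x, f (x, p.2) ∂μ) * ((∫ y, f (p.1, y) ∂ν) / m)) ∂(μ.prod ν)) ≠ ⊤ := by
    have heq : ∀ p : A × B,
        ENNReal.ofReal ((∫ x, f (x, p.2) ∂μ) * ((∫ y, f (p.1, y) ∂ν) / m))
          = ENNReal.ofReal (∫ x, f (x, p.2) ∂μ)
            * ENNReal.ofReal ((∫ y, f (p.1, y) ∂ν) / m) := fun p =>
      ENNReal.ofReal_mul (hG0 p.2)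
    rw [lintegral_congr heq]
    have hmeas : Measurable fun p : A × B =>
        ENNReal.ofReal (∫ x, f (x, p.2) ∂μ) * ENNReal.ofReal ((∫ y, f (p.1, y) ∂ν) / m) :=
      (hGm.comp measurable_snd).ennreal_ofReal.mul
        ((hFm.comp measurable_fst).div_const m).ennreal_ofReal
    rw [lintegral_prod _ hmeas.aemeasurable]
    have hinner : ∀ x : A, (∫⁻ y, ENNReal.ofReal (∫ x', f (x', y) ∂μ)
        * ENNReal.ofReal ((∫ y', f (x, y') ∂ν) / m) ∂ν)
        = ENNReal.ofReal m * ENNReal.ofReal ((∫ y', f (x, y') ∂ν) / m) := by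
      intro x
      rw [lintegral_mul_const _ (hGm.ennreal_ofReal)]
      rw [← ofReal_integral_eq_lintegral_ofReal hGi (ae_of_all _ hG0), hmG]
    rw [lintegral_congr hinner]
    rw [lintegral_const_mul _ ((hFm.div_const m).ennreal_ofReal)]
    have : (∫⁻ x, ENNReal.ofReal ((∫ y', f (x, y') ∂ν) / m) ∂μ)
        = ENNReal.ofReal 1 := by
      rw [← ofReal_integral_eq_lintegral_ofReal (hFi.div_const m)
        (ae_of_all _ fun x => div_nonneg (hF0 x) hm0)]
      · congr 1
        rw [integral_div, hmF, div_self hmp.ne']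
    rw [this]
    exact ENNReal.mul_ne_top ENNReal.ofReal_ne_top ENNReal.ofReal_ne_top
  have hΦfin : (∫⁻ p : A × B, ENNReal.ofReal (phi m (f p)) ∂(μ.prod ν)) ≠ ⊤ := by
    have hb : ∀ᵐ p ∂μ.prod ν, ENNReal.ofReal (phi m (f p))
        ≤ ENNReal.ofReal (phi (∫ y, f (p.1, y) ∂ν) (f p))
          + (ENNReal.ofReal (phi (∫ x, f (x, p.2) ∂μ) (f p))
            + ENNReal.ofReal ((∫ x, f (x, p.2) ∂μ) * ((∫ y, f (p.1, y) ∂ν) / m)))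
          + ENNReal.ofReal m := by
      filter_upwards [hyoung] with p hp
      have h1 : phi m (f p) ≤ phi (∫ y, f (p.1, y) ∂ν) (f p)
          + f p * (Real.log (∫ y, f (p.1, y) ∂ν) - Real.log m) + m := by
        rw [hsplitptw p]; have := hF0 p.1; linarith
      calc ENNReal.ofReal (phi m (f p))
          ≤ ENNReal.ofReal (phi (∫ y, f (p.1, y) ∂ν) (f p)
            + f p * (Real.log (∫ y, f (p.1, y) ∂ν) - Real.log m) + m) :=
            ENNReal.ofReal_le_ofReal h1
        _ ≤ ENNReal.ofReal (phi (∫ y, f (p.1, y) ∂ν) (f p)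
            + f p * (Real.log (∫ y, f (p.1, y) ∂ν) - Real.log m)) + ENNReal.ofReal m :=
            ENNReal.ofReal_add_le
        _ ≤ (ENNReal.ofReal (phi (∫ y, f (p.1, y) ∂ν) (f p))
            + ENNReal.ofReal (f p * (Real.log (∫ y, f (p.1, y) ∂ν) - Real.log m)))
            + ENNReal.ofReal m := add_le_add_left ENNReal.ofReal_add_le _
        _ ≤ _ := by
            refine add_le_add_left (add_le_add_right hp _) _
    have := lintegral_mono_ae hb
    refine ne_top_of_le_ne_top ?_ this
    rw [lintegral_add_right _ measurable_const]
    rw [lintegral_add_left (hΦ2m.ennreal_ofReal)]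
    rw [lintegral_add_left (hΦ1m.ennreal_ofReal)]
    rw [lintegral_const]
    refine ENNReal.add_ne_top.mpr ⟨ENNReal.add_ne_top.mpr ⟨hΦ2fin,
      ENNReal.add_ne_top.mpr ⟨hΦ1fin, hGFfin⟩⟩, ?_⟩
    exact ENNReal.mul_ne_top ENNReal.ofReal_ne_top (measure_ne_top _ _)
  have hΦm : Measurable fun p : A × B => phi m (f p) := measurable_phi_comp hf m
  have hΦnn : 0 ≤ᵐ[μ.prod ν] fun p : A × B => phi m (f p) :=
    ae_of_all _ fun p => phi_nonneg hmp (h0 p)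
  have hΦi : Integrable (fun p : A × B => phi m (f p)) (μ.prod ν) :=
    integrable_of_ofReal_lintegral_ne_top hΦm hΦnn hΦfin
  have hLHS : entE (μ.prod ν) f = ENNReal.ofReal (∫ p, phi m (f p) ∂(μ.prod ν)) := by
    rw [entE, ← hm, ← ofReal_integral_eq_lintegral_ofReal hΦi hΦnn]
  -- the remainder r = Φ - Φ2
  have hri : Integrable (fun p : A × B =>
      phi m (f p) - phi (∫ y, f (p.1, y) ∂ν) (f p)) (μ.prod ν) := hΦi.sub hΦ2i
  have hsplit : ∫ p, phi m (f p) ∂(μ.prod ν)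
      = (∫ p, phi (∫ y, f (p.1, y) ∂ν) (f p) ∂(μ.prod ν))
        + ∫ p, (phi m (f p) - phi (∫ y, f (p.1, y) ∂ν) (f p)) ∂(μ.prod ν) := by
    rw [← integral_add hΦ2i hri]
    refine integral_congr_ae (ae_of_all _ fun p => ?_)
    ring
  have hr_le : (∫ p, (phi m (f p) - phi (∫ y, f (p.1, y) ∂ν) (f p)) ∂(μ.prod ν))
      ≤ ∫ p, phi (∫ x, f (x, p.2) ∂μ) (f p) ∂(μ.prod ν) := by
    rw [integral_prod_symm _ hri, integral_prod_symm _ hΦ1i]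
    have HF2 : ∀ᵐ y ∂ν, ∀ᵐ x ∂μ, ((∫ y', f (x, y') ∂ν) = 0 → f (x, y) = 0) :=
      Measure.ae_ae_of_ae_prod (ae_prod_swap haeF)
    have HG2 : ∀ᵐ y ∂ν, ∀ᵐ x ∂μ, ((∫ x', f (x', y) ∂μ) = 0 → f (x, y) = 0) :=
      Measure.ae_ae_of_ae_prod (ae_prod_swap haeG)
    refine integral_mono_ae hri.integral_prod_right hΦ1i.integral_prod_right ?_
    filter_upwards [hri.prod_left_ae, hΦ1i.prod_left_ae, HF2, HG2] with y hy_r hy_Φ1 hyF hyG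
    have hident : ∀ x : A, phi m (f (x, y)) - phi (∫ y', f ((x, y).1, y') ∂ν) (f (x, y))
        = f (x, y) * (Real.log (∫ y', f (x, y') ∂ν) - Real.log m)
          + (m - ∫ y', f (x, y') ∂ν) := by
      intro x; unfold phi; ring
    have hFy_int : Integrable (fun x => m - ∫ y', f (x, y') ∂ν) μ :=
      (integrable_const m).sub hFi
    have hfv : Integrable
        (fun x => f (x, y) * (Real.log (∫ y', f (x, y') ∂ν) - Real.log m)) μ := by
      have he : (fun x => f (x, y) * (Real.log (∫ y', f (x, y') ∂ν) - Real.log m))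
          = fun x => (phi m (f (x, y)) - phi (∫ y', f ((x, y).1, y') ∂ν) (f (x, y)))
            - (m - ∫ y', f (x, y') ∂ν) := by
        funext x; rw [hident x]; ring
      rw [he]
      exact hy_r.sub hFy_int
    have hGFy : Integrable
        (fun x => (∫ x', f (x', y) ∂μ) * ((∫ y', f (x, y') ∂ν) / m)) μ :=
      (hFi.div_const m).const_mul _
    have hRHSy : Integrable (fun x => phi (∫ x', f (x', y) ∂μ) (f (x, y))
        - (∫ x', f (x', y) ∂μ)
        + (∫ x', f (x', y) ∂μ) * ((∫ y', f (x, y') ∂ν) / m)) μ :=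
      (hy_Φ1.sub (integrable_const _)).add hGFy
    have hcomp : ∀ᵐ x ∂μ, f (x, y) * (Real.log (∫ y', f (x, y') ∂ν) - Real.log m)
        ≤ phi (∫ x', f (x', y) ∂μ) (f (x, y)) - (∫ x', f (x', y) ∂μ)
          + (∫ x', f (x', y) ∂μ) * ((∫ y', f (x, y') ∂ν) / m) := by
      filter_upwards [hyF, hyG] with x hxF hxG
      by_cases hf0' : f (x, y) = 0
      · rw [hf0', zero_mul, phi_zero_right]
        have h1 := mul_nonneg (hG0 y) (div_nonneg (hF0 x) hm0)
        linarith
      · have hFp : 0 < ∫ y', f (x, y') ∂ν := (hF0 x).lt_of_ne fun h => hf0' (hxF h.symm)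
        have hGp : 0 < ∫ x', f (x', y) ∂μ := (hG0 y).lt_of_ne fun h => hf0' (hxG h.symm)
        have hY := young (h0 (x, y)) (hG0 y) (fun _ => hGp)
          (Real.log (∫ y', f (x, y') ∂ν) - Real.log m)
        rw [Real.exp_sub, Real.exp_log hFp, Real.exp_log hmp] at hY
        linarith
    calc ∫ x, (phi m (f (x, y)) - phi (∫ y', f ((x, y).1, y') ∂ν) (f (x, y))) ∂μ
        = ∫ x, (f (x, y) * (Real.log (∫ y', f (x, y') ∂ν) - Real.log m)
            + (m - ∫ y', f (x, y') ∂ν)) ∂μ :=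
          integral_congr_ae (ae_of_all _ fun x => hident x)
      _ = (∫ x, f (x, y) * (Real.log (∫ y', f (x, y') ∂ν) - Real.log m) ∂μ)
            + ∫ x, (m - ∫ y', f (x, y') ∂ν) ∂μ := integral_add hfv hFy_int
      _ = ∫ x, f (x, y) * (Real.log (∫ y', f (x, y') ∂ν) - Real.log m) ∂μ := by
          rw [integral_sub (integrable_const m) hFi, integral_const, hmF]
          simp
      _ ≤ ∫ x, (phi (∫ x', f (x', y) ∂μ) (f (x, y)) - (∫ x', f (x', y) ∂μ)
            + (∫ x', f (x', y) ∂μ) * ((∫ y', f (x, y') ∂ν) / m)) ∂μ :=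
          integral_mono_ae hfv hRHSy hcomp
      _ = ∫ x, phi (∫ x', f (x', y) ∂μ) (f (x, y)) ∂μ := by
          have hy_Φ1c : Integrable
              (fun x => phi (∫ x', f (x', y) ∂μ) (f (x, y)) - (∫ x', f (x', y) ∂μ)) μ :=
            hy_Φ1.sub (integrable_const _)
          rw [integral_add hy_Φ1c hGFy,
            integral_sub hy_Φ1 (integrable_const _), integral_const, integral_const_mul _ _,
            integral_div, hmF, div_self hmp.ne']
          simp
  calc entE (μ.prod ν) f
      = ENNReal.ofReal (∫ p, phi m (f p) ∂(μ.prod ν)) := hLHS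
    _ ≤ ENNReal.ofReal ((∫ p, phi (∫ y, f (p.1, y) ∂ν) (f p) ∂(μ.prod ν))
          + ∫ p, phi (∫ x, f (x, p.2) ∂μ) (f p) ∂(μ.prod ν)) := by
        refine ENNReal.ofReal_le_ofReal ?_
        rw [hsplit]
        exact add_le_add_right hr_le _
    _ ≤ ENNReal.ofReal (∫ p, phi (∫ y, f (p.1, y) ∂ν) (f p) ∂(μ.prod ν))
          + ENNReal.ofReal (∫ p, phi (∫ x, f (x, p.2) ∂μ) (f p) ∂(μ.prod ν)) :=
        ENNReal.ofReal_add_le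
    _ = (∫⁻ y, entE μ (fun x => f (x, y)) ∂ν) + ∫⁻ x, entE ν (fun y => f (x, y)) ∂μ := by
        rw [hR1val, hR2val, add_comm]

end Prod


lemma phi_self (c : ℝ) : phi c c = 0 := by unfold phi; ring


lemma entE_map {X Y : Type*} [MeasurableSpace X] [MeasurableSpace Y]
    {μX : Measure X} {μY : Measure Y} {T : X → Y} (hT : MeasurePreserving T μX μY)
    {g : Y → ℝ} (hg : Measurable g) : entE μX (fun x => g (T x)) = entE μY g := by
  unfold entE
  have hc : ∫ z, g (T z) ∂μX = ∫ z, g z ∂μY := by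
    rw [← hT.map_eq, integral_map hT.measurable.aemeasurable hg.aestronglyMeasurable]
  rw [hc]
  exact hT.lintegral_comp (measurable_phi.comp
    (measurable_const.prodMk hg)).ennreal_ofReal

lemma measurable_entE_param {X B : Type*} [MeasurableSpace X] [MeasurableSpace B]
    (ν : Measure B) [SFinite ν] {g : X × B → ℝ} (hg : Measurable g) :
    Measurable fun x => entE ν (fun y => g (x, y)) := by
  unfold entE
  have hM : Measurable fun x : X => ∫ z, g (x, z) ∂ν :=
    hg.stronglyMeasurable.integral_prod_right'.measurable
  have h1 : Measurable fun p : X × B => ENNReal.ofReal (phi (∫ z, g (p.1, z) ∂ν) (g p)) :=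
    (measurable_phi.comp ((hM.comp measurable_fst).prodMk hg)).ennreal_ofReal
  exact h1.lintegral_prod_right'

universe u

theorem Tmain : ∀ (n : ℕ) (Ω : Fin n → Type u) [∀ i, MeasurableSpace (Ω i)]
    (μ : ∀ i, Measure (Ω i)) [∀ i, IsProbabilityMeasure (μ i)]
    (f : (∀ i, Ω i) → ℝ), Measurable f → (∀ x, 0 ≤ f x) → Integrable f (Measure.pi μ) →
    entE (Measure.pi μ) f
      ≤ ∑ i, ∫⁻ x, entE (μ i) (fun y => f (Function.update x i y)) ∂(Measure.pi μ) := by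
  intro n
  induction n with
  | zero =>
      intro Ω _ μ _ f hf h0 hfi
      have hconst : ∀ x, f x = f default := fun x => by rw [Subsingleton.elim x default]
      have hm : ∫ z, f z ∂(Measure.pi μ) = f default := by
        rw [integral_congr_ae (ae_of_all _ hconst), integral_const]
        simp
      have hE : entE (Measure.pi μ) f = 0 := by
        rw [entE, hm]
        rw [lintegral_congr fun x => ?_, lintegral_zero]
        rw [hconst x, phi_self]
        simp
      rw [hE]
      simp
  | succ n ih =>
      intro Ω instM μ instP f hf h0 hfi
      set P := Measure.pi μ with hP
      set ν := Measure.pi (fun j : Fin n => μ (Fin.succ j)) with hν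
      set e : (∀ i, Ω i) ≃ᵐ Ω 0 × (∀ j : Fin n, Ω (Fin.succ j)) :=
        MeasurableEquiv.piFinSuccAbove Ω 0 with he
      have mp : MeasurePreserving e P ((μ 0).prod ν) := measurePreserving_piFinSuccAbove μ 0
      set g : Ω 0 × (∀ j : Fin n, Ω (Fin.succ j)) → ℝ := fun q => f (e.symm q) with hgdef
      have hg : Measurable g := hf.comp e.symm.measurable
      have hg0 : ∀ q, 0 ≤ g q := fun q => h0 _
      have hgi : Integrable g ((μ 0).prod ν) :=
        ((mp.symm e).integrable_comp_emb e.symm.measurableEmbedding).mpr hfi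
      have hfg : ∀ x, f x = g (e x) := fun x => by
        rw [hgdef]; simp [e.symm_apply_apply]
      have hcons : ∀ (a : Ω 0) (z : ∀ j : Fin n, Ω (Fin.succ j)),
          e.symm (a, z) = Fin.cons a z := by
        intro a z; rw [he]; exact Fin.insertNth_zero a z
      have hx : ∀ x : ∀ i, Ω i, Fin.cons (e x).1 (e x).2 = x := fun x => by
        rw [← hcons]; exact e.symm_apply_apply x
      have hsymm_upd : ∀ (x : ∀ i, Ω i) (j : Fin n) (y : Ω (Fin.succ j)),
          e.symm ((e x).1, Function.update (e x).2 j y) = Function.update x j.succ y := by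
        intro x j y
        rw [hcons, Fin.cons_update, hx]
      have hsymm_upd0 : ∀ (x : ∀ i, Ω i) (y : Ω 0),
          e.symm (y, (e x).2) = Function.update x 0 y := by
        intro x y
        rw [hcons]
        conv_rhs => rw [← hx x]
        rw [Fin.update_cons_zero]
      have hg_upd0 : ∀ (x : ∀ i, Ω i) (y : Ω 0),
          g (y, (e x).2) = f (Function.update x 0 y) := by
        intro x y
        rw [hgdef]
        simp only []
        rw [hsymm_upd0 x y]
      have hg_updj : ∀ (x : ∀ i, Ω i) (j : Fin n) (y : Ω (Fin.succ j)),
          g ((e x).1, Function.update (e x).2 j y) = f (Function.update x j.succ y) := by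
        intro x j y
        rw [hgdef]
        simp only []
        rw [hsymm_upd x j y]
      have h1 : entE P f = entE ((μ 0).prod ν) g := by
        conv_lhs => rw [funext hfg]
        exact entE_map mp hg
      have hWm : Measurable fun z : (∀ j : Fin n, Ω (Fin.succ j)) =>
          entE (μ 0) (fun a => g (a, z)) :=
        measurable_entE_param (μ 0) (hg.comp (measurable_snd.prodMk measurable_fst))
      have hWm2 : Measurable fun q : Ω 0 × (∀ j : Fin n, Ω (Fin.succ j)) =>
          entE (μ 0) (fun a => g (a, q.2)) := hWm.comp measurable_snd
      have hWprod : ∫⁻ q : Ω 0 × (∀ j : Fin n, Ω (Fin.succ j)),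
          entE (μ 0) (fun a => g (a, q.2)) ∂((μ 0).prod ν)
          = ∫⁻ z, entE (μ 0) (fun a => g (a, z)) ∂ν := by
        rw [lintegral_prod _ hWm2.aemeasurable]
        simp only []
        rw [lintegral_const, measure_univ, mul_one]
      have hcomp0 : ∫⁻ x, entE (μ 0) (fun y => f (Function.update x 0 y)) ∂P
          = ∫⁻ q, entE (μ 0) (fun a => g (a, q.2)) ∂((μ 0).prod ν) := by
        rw [← mp.lintegral_comp hWm2]
        refine lintegral_congr fun x => ?_
        congr 1
        funext y
        rw [← hg_upd0 x y]
      have hStepA : (∫⁻ z, entE (μ 0) (fun a => g (a, z)) ∂ν)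
          = ∫⁻ x, entE (μ 0) (fun y => f (Function.update x 0 y)) ∂P := by
        rw [hcomp0, hWprod]
      have hjm : ∀ j : Fin n, Measurable fun q : Ω 0 × (∀ j' : Fin n, Ω (Fin.succ j')) =>
          entE (μ (Fin.succ j)) (fun y => g (q.1, Function.update q.2 j y)) := by
        intro j
        exact measurable_entE_param (μ (Fin.succ j))
          (hg.comp ((measurable_fst.comp measurable_fst).prodMk
            (measurable_update'.comp
              ((measurable_snd.comp measurable_fst).prodMk measurable_snd))))
      have hae : ∀ᵐ a ∂(μ 0), entE ν (fun z => g (a, z))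
          ≤ ∑ j : Fin n, ∫⁻ z, entE (μ (Fin.succ j))
              (fun y => g (a, Function.update z j y)) ∂ν := by
        filter_upwards [hgi.prod_right_ae] with a ha
        exact ih (fun j => Ω (Fin.succ j)) (fun j => μ (Fin.succ j)) (fun z => g (a, z))
          (hg.comp measurable_prodMk_left) (fun z => hg0 _) ha
      have hStepB : (∫⁻ a, entE ν (fun z => g (a, z)) ∂(μ 0))
          ≤ ∑ j : Fin n, ∫⁻ x, entE (μ (Fin.succ j))
              (fun y => f (Function.update x (Fin.succ j) y)) ∂P := by
        calc ∫⁻ a, entE ν (fun z => g (a, z)) ∂(μ 0)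
            ≤ ∫⁻ a, ∑ j : Fin n, ∫⁻ z, entE (μ (Fin.succ j))
                (fun y => g (a, Function.update z j y)) ∂ν ∂(μ 0) := lintegral_mono_ae hae
          _ = ∑ j : Fin n, ∫⁻ a, ∫⁻ z, entE (μ (Fin.succ j))
                (fun y => g (a, Function.update z j y)) ∂ν ∂(μ 0) := by
              refine lintegral_finset_sum _ fun j _ => ?_
              exact (hjm j).lintegral_prod_right'
          _ = ∑ j : Fin n, ∫⁻ q, entE (μ (Fin.succ j))
                (fun y => g (q.1, Function.update q.2 j y)) ∂((μ 0).prod ν) := by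
              refine Finset.sum_congr rfl fun j _ => ?_
              rw [lintegral_prod _ (hjm j).aemeasurable]
          _ = ∑ j : Fin n, ∫⁻ x, entE (μ (Fin.succ j))
                (fun y => f (Function.update x (Fin.succ j) y)) ∂P := by
              refine Finset.sum_congr rfl fun j _ => ?_
              rw [← mp.lintegral_comp (hjm j)]
              refine lintegral_congr fun x => ?_
              congr 1
              funext y
              rw [← hg_updj x j y]
      rw [Fin.sum_univ_succ]
      calc entE P f = entE ((μ 0).prod ν) g := h1
        _ ≤ (∫⁻ z, entE (μ 0) (fun a => g (a, z)) ∂ν)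
              + ∫⁻ a, entE ν (fun z => g (a, z)) ∂(μ 0) := Bmain (μ 0) ν hg hg0 hgi
        _ ≤ (∫⁻ z, entE (μ 0) (fun a => g (a, z)) ∂ν)
              + ∑ j : Fin n, ∫⁻ x, entE (μ (Fin.succ j))
                  (fun y => f (Function.update x (Fin.succ j) y)) ∂P :=
            add_le_add_right hStepB _
        _ = _ := by rw [hStepA]


end EntTensor

open EntTensor in
/-- Tensorization (sub-additivity) of entropy: for a product probability measure
`P = μ_1 ⊗ ⋯ ⊗ μ_n` and a non-negative `f ∈ L¹(P)`,
`Ent_P(f) ≤ Σ_{i=1}^n ∫_X Ent_{μ_i}(f_i) dP`, where `f_i` is `f` as a function of the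
`i`-th coordinate, the other coordinates being fixed. -/
theorem entropy_tensorization {n : ℕ} {Ω : Fin n → Type*} [∀ i, MeasurableSpace (Ω i)]
    (μ : ∀ i, Measure (Ω i)) [∀ i, IsProbabilityMeasure (μ i)]
    (f : (∀ i, Ω i) → ℝ) (hf : Measurable f) (hf0 : ∀ x, 0 ≤ f x)
    (hfi : Integrable f (Measure.pi μ)) :
    entropy (Measure.pi μ) f ≤
      ((∑ i, ∫⁻ x, erealToENNReal (entropy (μ i) (fun y => f (Function.update x i y)))
          ∂(Measure.pi μ) : ℝ≥0∞) : EReal) := by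
  have hsum : (∑ i, ∫⁻ x, erealToENNReal (entropy (μ i) (fun y => f (Function.update x i y)))
        ∂(Measure.pi μ) : ℝ≥0∞)
      = ∑ i, ∫⁻ x, entE (μ i) (fun y => f (Function.update x i y)) ∂(Measure.pi μ) := by
    refine Finset.sum_congr rfl fun i _ => ?_
    refine lintegral_congr fun x => ?_
    have hslice : Measurable fun y => f (Function.update x i y) :=
      hf.comp (measurable_update x)
    rw [erealToENNReal_entropy hslice (fun y => hf0 _)]
  calc entropy (Measure.pi μ) f
      ≤ ((erealToENNReal (entropy (Measure.pi μ) f) : ℝ≥0∞) : EReal) :=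
        self_le_coe_erealToENNReal _
    _ = ((entE (Measure.pi μ) f : ℝ≥0∞) : EReal) := by
        rw [erealToENNReal_entropy hf hf0]
    _ ≤ ((∑ i, ∫⁻ x, entE (μ i) (fun y => f (Function.update x i y))
          ∂(Measure.pi μ) : ℝ≥0∞) : EReal) := by
        exact_mod_cast Tmain n Ω μ f hf hf0 hfi
    _ = _ := by rw [hsum]
end

section
/- (Efron–Stein inequality.) Let (Ω_i, Σ_i, μ_i), i = 1, …, n, be probability spaces and let P = μ_1 ⊗ ⋯ ⊗ μ_n be the product probability measure on X = Ω_1 × ⋯ × Ω_n. For every function f on X in L²(P), Var_P(f) ≤ Σ_{i=1}^n ∫_X Var_{μ_i}(f_i) dP, where f_i denotes f viewed as a function of the i-th coordinate with the other coordinates fixed. -/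
open MeasureTheory ProbabilityTheory
open scoped ENNReal

namespace EfronStein

variable {A B Y : Type*} [MeasurableSpace A] [MeasurableSpace B] [MeasurableSpace Y]

lemma mp_fst (α : Measure A) (β : Measure B) [SFinite β] [IsProbabilityMeasure β] :
    MeasurePreserving Prod.fst (α.prod β) α :=
  ⟨measurable_fst, by simp⟩

lemma mp_snd (α : Measure A) (β : Measure B) [SFinite β] [IsProbabilityMeasure α] :
    MeasurePreserving Prod.snd (α.prod β) β :=
  ⟨measurable_snd, by simp⟩

lemma sq_integral_le {μ : Measure Y} [IsProbabilityMeasure μ] {f : Y → ℝ}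
    (hf : MemLp f 2 μ) : (∫ y, f y ∂μ) ^ 2 ≤ ∫ y, (f y) ^ 2 ∂μ := by
  have h := variance_nonneg f μ
  rw [variance_eq_sub hf] at h
  simp only [Pi.pow_apply] at h
  linarith

lemma memLp_section_left {α : Measure A} {β : Measure B} [IsProbabilityMeasure α]
    [IsProbabilityMeasure β] {F : A × B → ℝ}
    (hF : Measurable F) (hFi : MemLp F 2 (α.prod β)) :
    ∀ᵐ b ∂β, MemLp (fun a => F (a, b)) 2 α := by
  have h1 := (hFi.integrable one_le_two).prod_left_ae
  have h2 := hFi.integrable_sq.prod_left_ae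
  filter_upwards [h1, h2] with b _ hb2
  exact (memLp_two_iff_integrable_sq
    ((hF.comp (measurable_id.prodMk measurable_const)).aestronglyMeasurable)).2 hb2

lemma memLp_section_right {α : Measure A} {β : Measure B} [IsProbabilityMeasure α]
    [IsProbabilityMeasure β] {F : A × B → ℝ}
    (hF : Measurable F) (hFi : MemLp F 2 (α.prod β)) :
    ∀ᵐ a ∂α, MemLp (fun b => F (a, b)) 2 β := by
  have h1 := (hFi.integrable one_le_two).prod_right_ae
  have h2 := hFi.integrable_sq.prod_right_ae
  filter_upwards [h1, h2] with a _ ha2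
  exact (memLp_two_iff_integrable_sq
    ((hF.comp (measurable_const.prodMk measurable_id)).aestronglyMeasurable)).2 ha2

lemma memLp_integral_left {α : Measure A} {β : Measure B} [IsProbabilityMeasure α]
    [IsProbabilityMeasure β] {F : A × B → ℝ}
    (hF : Measurable F) (hFi : MemLp F 2 (α.prod β)) :
    MemLp (fun b => ∫ a, F (a, b) ∂α) 2 β := by
  have hmeas : StronglyMeasurable (fun b => ∫ a, F (a, b) ∂α) :=
    hF.stronglyMeasurable.integral_prod_left'
  rw [memLp_two_iff_integrable_sq hmeas.aestronglyMeasurable]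
  have hu : Integrable (fun b => ∫ a, (F (a, b)) ^ 2 ∂α) β :=
    Integrable.integral_prod_right (f := fun p => F p ^ 2) hFi.integrable_sq
  refine hu.mono' ((hmeas.measurable.pow_const 2).aestronglyMeasurable) ?_
  filter_upwards [memLp_section_left hF hFi] with b hb
  rw [Real.norm_eq_abs, abs_of_nonneg (sq_nonneg _)]
  exact sq_integral_le hb

lemma measurable_evar_kernel {X : Type*} [MeasurableSpace X] (κ : Measure Y) [SFinite κ]
    {F : X × Y → ℝ} (hF : Measurable F) :
    Measurable (fun x => ENNReal.ofReal
      ((∫ y, (F (x, y)) ^ 2 ∂κ) - (∫ y, F (x, y) ∂κ) ^ 2)) := by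
  have h1 : StronglyMeasurable (fun x => ∫ y, (F (x, y)) ^ 2 ∂κ) :=
    StronglyMeasurable.integral_prod_right' (f := fun p => F p ^ 2)
      (hF.pow_const 2).stronglyMeasurable
  have h2 : StronglyMeasurable (fun x => ∫ y, F (x, y) ∂κ) :=
    hF.stronglyMeasurable.integral_prod_right'
  exact (h1.measurable.sub (h2.measurable.pow_const 2)).ennreal_ofReal

/-- Variance of an average is at most the average of the variances. -/
lemma var_integral_le (α : Measure A) (ν : Measure Y) [IsProbabilityMeasure α]
    [IsProbabilityMeasure ν] {H : A × Y → ℝ}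
    (hH : Measurable H) (hHi : MemLp H 2 (α.prod ν)) :
    ENNReal.ofReal ((∫ y, (∫ a, H (a, y) ∂α) ^ 2 ∂ν) - (∫ y, (∫ a, H (a, y) ∂α) ∂ν) ^ 2)
      ≤ ∫⁻ a, ENNReal.ofReal ((∫ y, (H (a, y)) ^ 2 ∂ν) - (∫ y, H (a, y) ∂ν) ^ 2) ∂α := by
  set G : Y → ℝ := fun y => ∫ a, H (a, y) ∂α with hGdef
  set m : A → ℝ := fun a => ∫ y, H (a, y) ∂ν with hmdef
  have hGsm : StronglyMeasurable G := hH.stronglyMeasurable.integral_prod_left'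
  have hmsm : StronglyMeasurable m := hH.stronglyMeasurable.integral_prod_right'
  have hGL2 : MemLp G 2 ν := memLp_integral_left hH hHi
  have hmL2 : MemLp m 2 α := by
    rw [memLp_two_iff_integrable_sq hmsm.aestronglyMeasurable]
    have hu : Integrable (fun a => ∫ y, (H (a, y)) ^ 2 ∂ν) α :=
      Integrable.integral_prod_left (f := fun p => H p ^ 2) hHi.integrable_sq
    refine hu.mono' ((hmsm.measurable.pow_const 2).aestronglyMeasurable) ?_
    filter_upwards [memLp_section_right hH hHi] with a ha
    rw [Real.norm_eq_abs, abs_of_nonneg (sq_nonneg _)]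
    exact sq_integral_le ha
  set c : ℝ := ∫ y, G y ∂ν with hcdef
  have hHint : Integrable H (α.prod ν) := hHi.integrable one_le_two
  have hc : c = ∫ a, m a ∂α := by
    rw [hcdef, hGdef, hmdef, ← integral_prod_symm H hHint, integral_prod H hHint]
  have hLHS : (∫ y, (G y) ^ 2 ∂ν) - (∫ y, G y ∂ν) ^ 2 = ∫ y, (G y - c) ^ 2 ∂ν := by
    have h1 := variance_eq_sub hGL2
    have h2 := variance_eq_integral hGL2.aemeasurable
    simp only [Pi.pow_apply, Pi.sub_apply] at h1 h2
    rw [← hcdef] at h1 h2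
    rw [← h1, h2]
  -- pointwise Jensen bound
  have hpt : ∀ᵐ y ∂ν, (G y - c) ^ 2 ≤ ∫ a, (H (a, y) - m a) ^ 2 ∂α := by
    filter_upwards [memLp_section_left hH hHi] with y hy
    have hdiff : MemLp (fun a => H (a, y) - m a) 2 α := hy.sub hmL2
    have h1 : G y - c = ∫ a, (H (a, y) - m a) ∂α := by
      rw [integral_sub (hy.integrable one_le_two) (hmL2.integrable one_le_two), hc]
    rw [h1]
    exact sq_integral_le hdiff
  have hGc2 : Integrable (fun y => (G y - c) ^ 2) ν := by
    have := (hGL2.sub (memLp_const c)).integrable_sq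
    simpa using this
  rw [hLHS, ofReal_integral_eq_lintegral_ofReal hGc2 (ae_of_all _ fun y => sq_nonneg _)]
  have hKmeas : Measurable (fun p : A × Y => (H p - m p.1) ^ 2) :=
    (hH.sub (hmsm.measurable.comp measurable_fst)).pow_const 2
  have hKi2 : Integrable (fun p : A × Y => (H p - m p.1) ^ 2) (α.prod ν) := by
    have hcomp : MemLp (fun p : A × Y => m p.1) 2 (α.prod ν) :=
      hmL2.comp_measurePreserving (mp_fst α ν)
    have : MemLp (fun p : A × Y => H p - m p.1) 2 (α.prod ν) := hHi.sub hcomp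
    simpa using this.integrable_sq
  have step1 : ∫⁻ y, ENNReal.ofReal ((G y - c) ^ 2) ∂ν
      ≤ ∫⁻ y, ∫⁻ a, ENNReal.ofReal ((H (a, y) - m a) ^ 2) ∂α ∂ν := by
    refine lintegral_mono_ae ?_
    filter_upwards [hpt, hKi2.prod_left_ae] with y h1 h2
    calc ENNReal.ofReal ((G y - c) ^ 2)
        ≤ ENNReal.ofReal (∫ a, (H (a, y) - m a) ^ 2 ∂α) := ENNReal.ofReal_le_ofReal h1
      _ = ∫⁻ a, ENNReal.ofReal ((H (a, y) - m a) ^ 2) ∂α :=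
          ofReal_integral_eq_lintegral_ofReal h2 (ae_of_all _ fun a => sq_nonneg _)
  refine step1.trans ?_
  rw [← lintegral_lintegral_swap]
  · refine le_of_eq (lintegral_congr_ae ?_)
    filter_upwards [memLp_section_right hH hHi] with a ha
    have h2 : Integrable (fun y => (H (a, y) - m a) ^ 2) ν := by
      simpa using (ha.sub (memLp_const (m a))).integrable_sq
    rw [← ofReal_integral_eq_lintegral_ofReal h2 (ae_of_all _ fun y => sq_nonneg _)]
    congr 1
    have e1 : ∫ y, (H (a, y) - m a) ^ 2 ∂ν = variance (fun y => H (a, y)) ν := by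
      rw [variance_eq_integral ha.aemeasurable]
    have e2 : variance (fun y => H (a, y)) ν
        = (∫ y, (H (a, y)) ^ 2 ∂ν) - (∫ y, H (a, y) ∂ν) ^ 2 := by
      rw [variance_eq_sub ha]
      simp only [Pi.pow_apply]
    rw [e1, e2]
  · exact ((hH.sub (hmsm.measurable.comp measurable_fst)).pow_const 2).ennreal_ofReal.aemeasurable

/-- Two-factor variance decomposition bound. -/
lemma var_prod_le (α : Measure A) (β : Measure B) [IsProbabilityMeasure α]
    [IsProbabilityMeasure β] {F : A × B → ℝ}
    (hF : Measurable F) (hFi : MemLp F 2 (α.prod β)) :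
    ENNReal.ofReal ((∫ p, F p ^ 2 ∂(α.prod β)) - (∫ p, F p ∂(α.prod β)) ^ 2)
      ≤ (∫⁻ b, ENNReal.ofReal ((∫ a, (F (a, b)) ^ 2 ∂α) - (∫ a, F (a, b) ∂α) ^ 2) ∂β)
        + ENNReal.ofReal ((∫ b, (∫ a, F (a, b) ∂α) ^ 2 ∂β)
            - (∫ b, (∫ a, F (a, b) ∂α) ∂β) ^ 2) := by
  set g : B → ℝ := fun b => ∫ a, F (a, b) ∂α with hgdef
  set u : B → ℝ := fun b => ∫ a, (F (a, b)) ^ 2 ∂α with hudef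
  have hsq : Integrable (fun p => F p ^ 2) (α.prod β) := hFi.integrable_sq
  have hint : Integrable F (α.prod β) := hFi.integrable one_le_two
  have hu_int : Integrable u β :=
    Integrable.integral_prod_right (f := fun p => F p ^ 2) hsq
  have hgL2 : MemLp g 2 β := memLp_integral_left hF hFi
  have hg2_int : Integrable (fun b => g b ^ 2) β := by simpa using hgL2.integrable_sq
  have e1 : ∫ p, F p ^ 2 ∂(α.prod β) = ∫ b, u b ∂β := integral_prod_symm _ hsq
  have e2 : ∫ p, F p ∂(α.prod β) = ∫ b, g b ∂β := integral_prod_symm _ hint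
  have e3 : (∫ b, u b ∂β) - (∫ b, g b ∂β) ^ 2
      = (∫ b, (u b - g b ^ 2) ∂β) + ((∫ b, g b ^ 2 ∂β) - (∫ b, g b ∂β) ^ 2) := by
    rw [integral_sub hu_int hg2_int]; ring
  rw [e1, e2, e3]
  refine (ENNReal.ofReal_add_le).trans (add_le_add ?_ le_rfl)
  have hnn : 0 ≤ᵐ[β] fun b => u b - g b ^ 2 := by
    filter_upwards [memLp_section_left hF hFi] with b hb
    simpa [sub_nonneg] using sq_integral_le hb
  have hint2 : Integrable (fun b => u b - g b ^ 2) β := hu_int.sub hg2_int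
  rw [ofReal_integral_eq_lintegral_ofReal hint2 hnn]


lemma insertNth_update' {n : ℕ} {α : Fin (n + 1) → Type*} (p : Fin (n + 1)) (c : α p)
    (z : ∀ j, α (p.succAbove j)) (j : Fin n) (y : α (p.succAbove j)) :
    p.insertNth c (Function.update z j y)
      = Function.update (p.insertNth c z) (p.succAbove j) y := by
  ext k
  cases k using p.succAboveCases with
  | x =>
    rw [Fin.insertNth_apply_same,
      Function.update_of_ne (Fin.ne_succAbove p j), Fin.insertNth_apply_same]
  | p j' =>
    rcases eq_or_ne j' j with rfl | hj
    · rw [Fin.insertNth_apply_succAbove, Function.update_self, Function.update_self]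
    · rw [Fin.insertNth_apply_succAbove, Function.update_of_ne hj,
        Function.update_of_ne (Fin.succAbove_right_injective.ne hj),
        Fin.insertNth_apply_succAbove]

universe u

theorem efron_stein_aux :
    ∀ (n : ℕ) (Ω : Fin n → Type u) [∀ i, MeasurableSpace (Ω i)]
      (μ : ∀ i, Measure (Ω i)) [∀ i, IsProbabilityMeasure (μ i)]
      (A : Type u) [MeasurableSpace A] (α : Measure A) [IsProbabilityMeasure α]
      (F : A × (∀ i, Ω i) → ℝ), Measurable F → MemLp F 2 (α.prod (Measure.pi μ)) →
    ENNReal.ofReal ((∫ x, (∫ a, F (a, x) ∂α) ^ 2 ∂Measure.pi μ)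
        - (∫ x, (∫ a, F (a, x) ∂α) ∂Measure.pi μ) ^ 2)
      ≤ ∑ i, ∫⁻ p, ENNReal.ofReal ((∫ y, (F (p.1, Function.update p.2 i y)) ^ 2 ∂μ i)
          - (∫ y, F (p.1, Function.update p.2 i y) ∂μ i) ^ 2) ∂(α.prod (Measure.pi μ)) := by
  intro n
  induction n with
  | zero =>
    intro Ω _ μ _ A _ α _ F hF hFi
    have hconst : ∀ (k : (∀ i, Ω i) → ℝ),
        ∫ x, k x ∂Measure.pi μ = k (fun i => i.elim0) := by
      intro k
      have hk : k = fun _ => k (fun i => i.elim0) :=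
        funext fun x => congrArg k (Subsingleton.elim _ _)
      rw [hk, integral_const]
      simp
    rw [hconst (fun x => (∫ a, F (a, x) ∂α) ^ 2), hconst (fun x => ∫ a, F (a, x) ∂α),
      sub_self, ENNReal.ofReal_zero]
    exact bot_le
  | succ n ih =>
    intro Ω _ μ _ A _ α _ F hF hFi
    set e := MeasurableEquiv.piFinSuccAbove Ω 0 with he
    set β := Measure.pi (fun j => μ ((0 : Fin (n + 1)).succAbove j)) with hβ
    have mp : MeasurePreserving e (Measure.pi μ) ((μ 0).prod β) :=
      measurePreserving_piFinSuccAbove μ 0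
    have mpsymm : MeasurePreserving e.symm ((μ 0).prod β) (Measure.pi μ) :=
      MeasurePreserving.symm e mp
    have hesymm : ∀ q : Ω 0 × (∀ j, Ω ((0 : Fin (n + 1)).succAbove j)),
        e.symm q = Fin.insertNth 0 q.1 q.2 := by
      intro q
      rw [he, MeasurableEquiv.piFinSuccAbove_symm_apply]
      rfl
    have hupd0 : ∀ (c : Ω 0) (z : ∀ j, Ω ((0 : Fin (n + 1)).succAbove j)) (y : Ω 0),
        Function.update (e.symm (c, z)) 0 y = e.symm (y, z) := by
      intro c z y
      rw [hesymm, hesymm]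
      exact Fin.update_insertNth 0 c y z
    have hupdj : ∀ (c : Ω 0) (z : ∀ j, Ω ((0 : Fin (n + 1)).succAbove j)) (j : Fin n)
        (y : Ω ((0 : Fin (n + 1)).succAbove j)),
        e.symm (c, Function.update z j y)
          = Function.update (e.symm (c, z)) ((0 : Fin (n + 1)).succAbove j) y := by
      intro c z j y
      rw [hesymm, hesymm]
      exact insertNth_update' 0 c z j y
    set Φ : (A × Ω 0) × (∀ j, Ω ((0 : Fin (n + 1)).succAbove j)) → A × (∀ i, Ω i) :=
      fun q => (q.1.1, e.symm (q.1.2, q.2)) with hΦ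
    have hΦm : Measurable Φ :=
      (measurable_fst.comp measurable_fst).prodMk
        (e.symm.measurable.comp ((measurable_snd.comp measurable_fst).prodMk measurable_snd))
    have hΦp : MeasurePreserving Φ ((α.prod (μ 0)).prod β) (α.prod (Measure.pi μ)) := by
      have h1 := measurePreserving_prodAssoc α (μ 0) β
      have h2 : MeasurePreserving (Prod.map (fun a : A => a) ⇑e.symm)
          (α.prod ((μ 0).prod β)) (α.prod (Measure.pi μ)) :=
        (MeasurePreserving.id α).prod mpsymm
      have hcomp := h2.comp h1
      have heq : (Prod.map (fun a : A => a) ⇑e.symm) ∘ ⇑(MeasurableEquiv.prodAssoc) = Φ :=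
        rfl
      rwa [heq] at hcomp
    set FΦ : (A × Ω 0) × (∀ j, Ω ((0 : Fin (n + 1)).succAbove j)) → ℝ :=
      fun q => F (Φ q) with hFΦ
    have hFΦm : Measurable FΦ := hF.comp hΦm
    have hFΦi : MemLp FΦ 2 ((α.prod (μ 0)).prod β) := hFi.comp_measurePreserving hΦp
    have hhsm : StronglyMeasurable (fun x => ∫ a, F (a, x) ∂α) :=
      hF.stronglyMeasurable.integral_prod_left'
    have hhL2 : MemLp (fun x => ∫ a, F (a, x) ∂α) 2 (Measure.pi μ) := memLp_integral_left hF hFi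
    set Fp : Ω 0 × (∀ j, Ω ((0 : Fin (n + 1)).succAbove j)) → ℝ :=
      fun q => ∫ a, F (a, e.symm q) ∂α with hFp
    have hFpm : Measurable Fp := hhsm.measurable.comp e.symm.measurable
    have hFpi : MemLp Fp 2 ((μ 0).prod β) := hhL2.comp_measurePreserving mpsymm
    -- transporting the goal's left-hand side
    have hLHSeq : (∫ x, (∫ a, F (a, x) ∂α) ^ 2 ∂Measure.pi μ)
          - (∫ x, (∫ a, F (a, x) ∂α) ∂Measure.pi μ) ^ 2
        = (∫ q, Fp q ^ 2 ∂((μ 0).prod β)) - (∫ q, Fp q ∂((μ 0).prod β)) ^ 2 := by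
      rw [← mpsymm.integral_comp' (fun x => (∫ a, F (a, x) ∂α) ^ 2),
        ← mpsymm.integral_comp' (fun x => ∫ a, F (a, x) ∂α)]
    -- the two-factor split
    have main := var_prod_le (μ 0) β hFpm hFpi
    -- measurability of the i-th kernel
    have hkermeas : ∀ i : Fin (n + 1), Measurable (fun p : A × (∀ i, Ω i) => ENNReal.ofReal
        ((∫ y, (F (p.1, Function.update p.2 i y)) ^ 2 ∂μ i)
          - (∫ y, F (p.1, Function.update p.2 i y) ∂μ i) ^ 2)) := by
      intro i
      refine measurable_evar_kernel (μ i) (F := fun w : (A × (∀ i, Ω i)) × Ω i =>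
        F (w.1.1, Function.update w.1.2 i w.2)) ?_
      exact hF.comp ((measurable_fst.comp measurable_fst).prodMk
        (measurable_update'.comp ((measurable_snd.comp measurable_fst).prodMk measurable_snd)))
    -- measurability of the K kernel
    have hKm : Measurable (fun s : A × (∀ j, Ω ((0 : Fin (n + 1)).succAbove j)) =>
        ENNReal.ofReal ((∫ c, (F (s.1, e.symm (c, s.2))) ^ 2 ∂μ 0)
          - (∫ c, F (s.1, e.symm (c, s.2)) ∂μ 0) ^ 2)) := by
      refine measurable_evar_kernel (μ 0) (F := fun w : (A × (∀ j, Ω ((0 : Fin (n + 1)).succAbove j))) × Ω 0 =>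
        F (w.1.1, e.symm (w.2, w.1.2))) ?_
      exact hF.comp ((measurable_fst.comp measurable_fst).prodMk
        (e.symm.measurable.comp (measurable_snd.prodMk (measurable_snd.comp measurable_fst))))
    -- Term A
    have hTA : (∫⁻ z, ENNReal.ofReal ((∫ c, (Fp (c, z)) ^ 2 ∂μ 0)
          - (∫ c, Fp (c, z) ∂μ 0) ^ 2) ∂β)
        ≤ ∫⁻ p, ENNReal.ofReal ((∫ y, (F (p.1, Function.update p.2 0 y)) ^ 2 ∂μ 0)
            - (∫ y, F (p.1, Function.update p.2 0 y) ∂μ 0) ^ 2) ∂(α.prod (Measure.pi μ)) := by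
      have hsec := memLp_section_left hFΦm hFΦi
      have step : ∀ᵐ z ∂β, ENNReal.ofReal ((∫ c, (Fp (c, z)) ^ 2 ∂μ 0)
            - (∫ c, Fp (c, z) ∂μ 0) ^ 2)
          ≤ ∫⁻ a, ENNReal.ofReal ((∫ c, (F (a, e.symm (c, z))) ^ 2 ∂μ 0)
              - (∫ c, F (a, e.symm (c, z)) ∂μ 0) ^ 2) ∂α := by
        filter_upwards [hsec] with z hz
        have hHm : Measurable (fun q : A × Ω 0 => F (q.1, e.symm (q.2, z))) :=
          hF.comp (measurable_fst.prodMk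
            (e.symm.measurable.comp (measurable_snd.prodMk measurable_const)))
        exact var_integral_le α (μ 0) hHm hz
      refine (lintegral_mono_ae step).trans (le_of_eq ?_)
      have hθ : MeasurePreserving (Prod.map (Prod.fst : A × Ω 0 → A)
            (fun z : (∀ j, Ω ((0 : Fin (n + 1)).succAbove j)) => z))
          ((α.prod (μ 0)).prod β) (α.prod β) :=
        (mp_fst α (μ 0)).prod (MeasurePreserving.id β)
      have h4 : (∫⁻ z, ∫⁻ a, ENNReal.ofReal ((∫ c, (F (a, e.symm (c, z))) ^ 2 ∂μ 0)
              - (∫ c, F (a, e.symm (c, z)) ∂μ 0) ^ 2) ∂α ∂β)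
          = ∫⁻ s, ENNReal.ofReal ((∫ c, (F (s.1, e.symm (c, s.2))) ^ 2 ∂μ 0)
              - (∫ c, F (s.1, e.symm (c, s.2)) ∂μ 0) ^ 2) ∂(α.prod β) :=
        (lintegral_prod_symm _ hKm.aemeasurable).symm
      have h5 : (∫⁻ s, ENNReal.ofReal ((∫ c, (F (s.1, e.symm (c, s.2))) ^ 2 ∂μ 0)
              - (∫ c, F (s.1, e.symm (c, s.2)) ∂μ 0) ^ 2) ∂(α.prod β))
          = ∫⁻ q, ENNReal.ofReal ((∫ c, (F (q.1.1, e.symm (c, q.2))) ^ 2 ∂μ 0)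
              - (∫ c, F (q.1.1, e.symm (c, q.2)) ∂μ 0) ^ 2) ∂((α.prod (μ 0)).prod β) :=
        (hθ.lintegral_comp hKm).symm
      have h6 : (∫⁻ q, ENNReal.ofReal ((∫ c, (F (q.1.1, e.symm (c, q.2))) ^ 2 ∂μ 0)
              - (∫ c, F (q.1.1, e.symm (c, q.2)) ∂μ 0) ^ 2) ∂((α.prod (μ 0)).prod β))
          = ∫⁻ q, ENNReal.ofReal
              ((∫ y, (F ((Φ q).1, Function.update (Φ q).2 0 y)) ^ 2 ∂μ 0)
                - (∫ y, F ((Φ q).1, Function.update (Φ q).2 0 y) ∂μ 0) ^ 2)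
              ∂((α.prod (μ 0)).prod β) := by
        refine lintegral_congr fun q => ?_
        have hy : ∀ y : Ω 0, F ((Φ q).1, Function.update (Φ q).2 0 y)
            = F (q.1.1, e.symm (y, q.2)) := by
          intro y
          show F (q.1.1, Function.update (e.symm (q.1.2, q.2)) 0 y) = _
          rw [hupd0]
        simp only [hy]
      have h7 : (∫⁻ q, ENNReal.ofReal
              ((∫ y, (F ((Φ q).1, Function.update (Φ q).2 0 y)) ^ 2 ∂μ 0)
                - (∫ y, F ((Φ q).1, Function.update (Φ q).2 0 y) ∂μ 0) ^ 2)
              ∂((α.prod (μ 0)).prod β))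
          = ∫⁻ p, ENNReal.ofReal ((∫ y, (F (p.1, Function.update p.2 0 y)) ^ 2 ∂μ 0)
              - (∫ y, F (p.1, Function.update p.2 0 y) ∂μ 0) ^ 2) ∂(α.prod (Measure.pi μ)) :=
        hΦp.lintegral_comp (hkermeas 0)
      exact h4.trans (h5.trans (h6.trans h7))
    -- Term B
    have hTB : ENNReal.ofReal ((∫ z, (∫ c, Fp (c, z) ∂μ 0) ^ 2 ∂β)
          - (∫ z, (∫ c, Fp (c, z) ∂μ 0) ∂β) ^ 2)
        ≤ ∑ j : Fin n, ∫⁻ p, ENNReal.ofReal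
            ((∫ y, (F (p.1, Function.update p.2 ((0 : Fin (n + 1)).succAbove j) y)) ^ 2
                ∂μ ((0 : Fin (n + 1)).succAbove j))
              - (∫ y, F (p.1, Function.update p.2 ((0 : Fin (n + 1)).succAbove j) y)
                  ∂μ ((0 : Fin (n + 1)).succAbove j)) ^ 2) ∂(α.prod (Measure.pi μ)) := by
      have hgeq : (fun z => ∫ c, Fp (c, z) ∂μ 0)
          =ᵐ[β] (fun z => ∫ q, FΦ (q, z) ∂(α.prod (μ 0))) := by
        filter_upwards [(hFΦi.integrable one_le_two).prod_left_ae] with z hz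
        rw [integral_prod_symm _ hz]
      have e1 : ∫ z, (∫ c, Fp (c, z) ∂μ 0) ^ 2 ∂β
          = ∫ z, (∫ q, FΦ (q, z) ∂(α.prod (μ 0))) ^ 2 ∂β :=
        integral_congr_ae (hgeq.fun_comp fun t => t ^ 2)
      have e2 : ∫ z, (∫ c, Fp (c, z) ∂μ 0) ∂β
          = ∫ z, (∫ q, FΦ (q, z) ∂(α.prod (μ 0))) ∂β := integral_congr_ae hgeq
      rw [e1, e2]
      have hih := ih (fun j => Ω ((0 : Fin (n + 1)).succAbove j))
        (fun j => μ ((0 : Fin (n + 1)).succAbove j)) (A × Ω 0) (α.prod (μ 0)) FΦ hFΦm hFΦi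
      refine hih.trans (le_of_eq (Finset.sum_congr rfl fun j _ => ?_))
      have hy : ∀ (r : (A × Ω 0) × (∀ j, Ω ((0 : Fin (n + 1)).succAbove j)))
          (y : Ω ((0 : Fin (n + 1)).succAbove j)),
          FΦ (r.1, Function.update r.2 j y)
            = F ((Φ r).1, Function.update (Φ r).2 ((0 : Fin (n + 1)).succAbove j) y) := by
        intro r y
        show F (r.1.1, e.symm (r.1.2, Function.update r.2 j y)) = _
        rw [hupdj]
      have h8 : (∫⁻ r, ENNReal.ofReal
              ((∫ y, (FΦ (r.1, Function.update r.2 j y)) ^ 2 ∂μ ((0 : Fin (n + 1)).succAbove j))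
                - (∫ y, FΦ (r.1, Function.update r.2 j y)
                    ∂μ ((0 : Fin (n + 1)).succAbove j)) ^ 2) ∂((α.prod (μ 0)).prod β))
          = ∫⁻ r, ENNReal.ofReal
              ((∫ y, (F ((Φ r).1, Function.update (Φ r).2 ((0 : Fin (n + 1)).succAbove j) y)) ^ 2
                  ∂μ ((0 : Fin (n + 1)).succAbove j))
                - (∫ y, F ((Φ r).1, Function.update (Φ r).2 ((0 : Fin (n + 1)).succAbove j) y)
                    ∂μ ((0 : Fin (n + 1)).succAbove j)) ^ 2) ∂((α.prod (μ 0)).prod β) := by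
        refine lintegral_congr fun r => ?_
        simp only [hy]
      exact h8.trans (hΦp.lintegral_comp (hkermeas ((0 : Fin (n + 1)).succAbove j)))
    -- putting everything together
    calc ENNReal.ofReal ((∫ x, (∫ a, F (a, x) ∂α) ^ 2 ∂Measure.pi μ)
          - (∫ x, (∫ a, F (a, x) ∂α) ∂Measure.pi μ) ^ 2)
        = ENNReal.ofReal ((∫ q, Fp q ^ 2 ∂((μ 0).prod β))
            - (∫ q, Fp q ∂((μ 0).prod β)) ^ 2) := by rw [hLHSeq]
      _ ≤ _ := main
      _ ≤ _ := add_le_add hTA hTB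
      _ = ∑ i, ∫⁻ p, ENNReal.ofReal ((∫ y, (F (p.1, Function.update p.2 i y)) ^ 2 ∂μ i)
          - (∫ y, F (p.1, Function.update p.2 i y) ∂μ i) ^ 2) ∂(α.prod (Measure.pi μ)) :=
        (Fin.sum_univ_succAbove (fun i => ∫⁻ p, ENNReal.ofReal
          ((∫ y, (F (p.1, Function.update p.2 i y)) ^ 2 ∂μ i)
            - (∫ y, F (p.1, Function.update p.2 i y) ∂μ i) ^ 2)
          ∂(α.prod (Measure.pi μ))) 0).symm

end EfronStein

/-- Efron–Stein inequality: for a product probability measure `P = μ_1 ⊗ ⋯ ⊗ μ_n` and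
`f ∈ L²(P)`, `Var_P(f) ≤ Σ_{i=1}^n ∫_X Var_{μ_i}(f_i) dP`, where `f_i` is `f` as a function
of the `i`-th coordinate, the other coordinates being fixed, and
`Var_μ(g) = ∫ g² dμ − (∫ g dμ)²`. -/
theorem efron_stein {n : ℕ} {Ω : Fin n → Type*} [∀ i, MeasurableSpace (Ω i)]
    (μ : ∀ i, Measure (Ω i)) [∀ i, IsProbabilityMeasure (μ i)]
    (f : (∀ i, Ω i) → ℝ) (hf : Measurable f) (hfi : MemLp f 2 (Measure.pi μ)) :
    ENNReal.ofReal ((∫ x, (f x) ^ 2 ∂(Measure.pi μ)) - (∫ x, f x ∂(Measure.pi μ)) ^ 2) ≤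
      ∑ i, ∫⁻ x, ENNReal.ofReal ((∫ y, (f (Function.update x i y)) ^ 2 ∂(μ i)) -
        (∫ y, f (Function.update x i y) ∂(μ i)) ^ 2) ∂(Measure.pi μ) := by
  have key := EfronStein.efron_stein_aux n Ω μ PUnit (Measure.dirac PUnit.unit)
    (fun p => f p.2) (hf.comp measurable_snd)
    (hfi.comp_measurePreserving (EfronStein.mp_snd _ _))
  simp only [integral_const, measure_univ, ENNReal.toReal_one, one_smul, probReal_univ] at key
  refine key.trans (le_of_eq (Finset.sum_congr rfl fun i _ => ?_))
  have hG : Measurable (fun x : ∀ i, Ω i => ENNReal.ofReal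
      ((∫ y, (f (Function.update x i y)) ^ 2 ∂μ i)
        - (∫ y, f (Function.update x i y) ∂μ i) ^ 2)) := by
    refine EfronStein.measurable_evar_kernel (μ i)
      (F := fun w : (∀ i, Ω i) × Ω i => f (Function.update w.1 i w.2)) ?_
    exact hf.comp measurable_update'
  exact MeasurePreserving.lintegral_comp
    (EfronStein.mp_snd (Measure.dirac PUnit.unit) (Measure.pi μ))
    (f := fun x => ENNReal.ofReal ((∫ y, (f (Function.update x i y)) ^ 2 ∂μ i)
      - (∫ y, f (Function.update x i y) ∂μ i) ^ 2)) hG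
end

section
/- (Logarithmic Sobolev inequality on the two-point space.) Let 0 < p < 1, q = 1 − p, and let μ_p be the probability measure on {−1, +1} with μ_p({+1}) = p and μ_p({−1}) = q. For every function f : {−1, +1} → ℝ, Ent_{μ_p}(f²) ≤ (1/ρ) · p q · (f(+1) − f(−1))², where ρ = (p − q)/(log p − log q) (with ρ = 1/2 when p = 1/2). -/
open MeasureTheory Real Set

private lemma mvt_mono {f f' : ℝ → ℝ} {a b : ℝ} (hab : a ≤ b)
    (hc : ContinuousOn f (Set.Icc a b))
    (hd : ∀ x ∈ Set.Ioo a b, HasDerivAt f (f' x) x)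
    (hs : ∀ x ∈ Set.Ioo a b, 0 ≤ f' x) : f a ≤ f b := by
  rcases eq_or_lt_of_le hab with h | h
  · rw [h]
  · obtain ⟨c, hcmem, he⟩ := exists_hasDerivAt_eq_slope f f' h hc hd
    have h0 : 0 ≤ (f b - f a) / (b - a) := he ▸ hs c hcmem
    have hba : 0 < b - a := by linarith
    nlinarith [(le_div_iff₀ hba).mp h0]

private lemma mvt_anti {f f' : ℝ → ℝ} {a b : ℝ} (hab : a ≤ b)
    (hc : ContinuousOn f (Set.Icc a b))
    (hd : ∀ x ∈ Set.Ioo a b, HasDerivAt f (f' x) x)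
    (hs : ∀ x ∈ Set.Ioo a b, f' x ≤ 0) : f b ≤ f a := by
  rcases eq_or_lt_of_le hab with h | h
  · rw [h]
  · obtain ⟨c, hcmem, he⟩ := exists_hasDerivAt_eq_slope f f' h hc hd
    have h0 : (f b - f a) / (b - a) ≤ 0 := he ▸ hs c hcmem
    have hba : 0 < b - a := by linarith
    nlinarith [(div_le_iff₀ hba).mp h0]
private lemma middle_nonneg {r s t : ℝ} (hrs : r ≤ s) (hst : s ≤ t)
    {G P S : ℝ → ℝ}
    (hGc : ContinuousOn G (Set.Icc r t))
    (hG' : ∀ x ∈ Set.Ioo r t, HasDerivAt G (P x) x)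
    (hPc : ContinuousOn P (Set.Icc r t))
    (hP' : ∀ x ∈ Set.Ioo r t, HasDerivAt P (S x) x)
    (hanti : ∀ x ∈ Set.Icc r s, ∀ y ∈ Set.Icc r s, x ≤ y → S y ≤ S x)
    (hmono : ∀ x ∈ Set.Icc s t, ∀ y ∈ Set.Icc s t, x ≤ y → S x ≤ S y)
    (hPr : P r = 0) (hPt : P t = 0) (hGr : 0 ≤ G r) (hGt : 0 ≤ G t) :
    ∀ x ∈ Set.Icc r t, 0 ≤ G x := by
  have hrt : r ≤ t := le_trans hrs hst
  -- once P goes negative, it stays nonpositive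
  have key : ∀ y ∈ Set.Icc r t, P y < 0 → ∀ z ∈ Set.Icc r t, y ≤ z → P z ≤ 0 := by
    intro y hy hPy z hz hyz
    by_contra hPz
    push_neg at hPz
    have hry : r < y := by
      rcases eq_or_lt_of_le hy.1 with h | h
      · exfalso; rw [← h] at hPy; linarith
      · exact h
    have hyz' : y < z := by
      rcases eq_or_lt_of_le hyz with h | h
      · exfalso; rw [h] at hPy; linarith
      · exact h
    have hzt : z < t := by
      rcases eq_or_lt_of_le hz.2 with h | h
      · exfalso; rw [h] at hPz; linarith
      · exact h
    obtain ⟨w, hw, hew⟩ := exists_hasDerivAt_eq_slope P S hry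
      (hPc.mono (Set.Icc_subset_Icc le_rfl hy.2))
      (fun x hx => hP' x ⟨hx.1, lt_of_lt_of_le hx.2 hy.2⟩)
    obtain ⟨u, hu, heu⟩ := exists_hasDerivAt_eq_slope P S hyz'
      (hPc.mono (Set.Icc_subset_Icc hy.1 hz.2))
      (fun x hx => hP' x ⟨lt_of_le_of_lt hy.1 hx.1, lt_of_lt_of_le hx.2 hz.2⟩)
    obtain ⟨v, hv, hev⟩ := exists_hasDerivAt_eq_slope P S hzt
      (hPc.mono (Set.Icc_subset_Icc hz.1 le_rfl))
      (fun x hx => hP' x ⟨lt_of_le_of_lt hz.1 hx.1, hx.2⟩)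
    have hSw : S w < 0 := by
      rw [hew, hPr]; apply div_neg_of_neg_of_pos <;> linarith
    have hSu : 0 < S u := by
      rw [heu]; apply div_pos <;> linarith
    have hSv : S v < 0 := by
      rw [hev, hPt]; apply div_neg_of_neg_of_pos <;> linarith
    rcases le_total u s with h | h
    · have : S u ≤ S w := by
        apply hanti w ⟨hw.1.le, by linarith [hu.1, hw.2]⟩ u ⟨by linarith [hu.1, hw.2], h⟩
        linarith [hw.2, hu.1]
      linarith
    · have : S u ≤ S v := by
        apply hmono u ⟨h, by linarith [hu.2, hv.1]⟩ v ⟨by linarith [hu.2, hv.1], hv.2.le⟩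
        linarith [hu.2, hv.1]
      linarith
  intro x hx
  by_cases hcase : ∀ y ∈ Set.Ico r x, 0 ≤ P y
  · have : G r ≤ G x :=
      mvt_mono hx.1 (hGc.mono (Set.Icc_subset_Icc le_rfl hx.2))
        (fun z hz => hG' z ⟨hz.1, lt_of_lt_of_le hz.2 hx.2⟩)
        (fun z hz => hcase z ⟨hz.1.le, hz.2⟩)
    linarith
  · push_neg at hcase
    obtain ⟨y, hy, hPy⟩ := hcase
    have hneg : ∀ z ∈ Set.Ioo x t, P z ≤ 0 := by
      intro z hz
      exact key y ⟨hy.1, by linarith [hy.2, hx.2]⟩ hPy z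
        ⟨by linarith [hy.1, hz.1.le, hx.1], hz.2.le⟩ (by linarith [hy.2, hz.1])
    have : G t ≤ G x :=
      mvt_anti hx.2 (hGc.mono (Set.Icc_subset_Icc hx.1 le_rfl))
        (fun z hz => hG' z ⟨lt_of_le_of_lt hx.1 hz.1, hz.2⟩) hneg
    linarith
private lemma plog_lemma {p : ℝ} (hp : 1/2 ≤ p) (hp1 : p ≤ 1) :
    (1-p) * Real.log (1-p) ≤ p * Real.log p := by
  set f : ℝ → ℝ := fun x => x * Real.log x - (1-x) * Real.log (1-x) with hf
  have hfc : Continuous f := by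
    apply Continuous.sub Real.continuous_mul_log
    exact Real.continuous_mul_log.comp (continuous_const.sub continuous_id)
  have hf' : ∀ y ∈ Set.Ioo (1/2 : ℝ) 1,
      HasDerivAt f (Real.log y + Real.log (1-y) + 2) y := by
    intro y hy
    have h1 : (y : ℝ) ≠ 0 := ne_of_gt (by linarith [hy.1])
    have h2 : (1 - y : ℝ) ≠ 0 := ne_of_gt (by linarith [hy.2])
    have d1 : HasDerivAt (fun x : ℝ => x * Real.log x) (Real.log y + 1) y :=
      Real.hasDerivAt_mul_log h1
    have dinner : HasDerivAt (fun x : ℝ => 1 - x) (-1 : ℝ) y := by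
      simpa using (hasDerivAt_id y).const_sub 1
    have d2 : HasDerivAt (fun x : ℝ => (1-x) * Real.log (1-x))
        ((Real.log (1-y) + 1) * (-1)) y :=
      (Real.hasDerivAt_mul_log h2).comp y dinner
    have hd := d1.sub d2
    refine hd.congr_deriv ?_
    ring
  have hf'' : ∀ z ∈ Set.Ioo (1/2 : ℝ) 1,
      HasDerivAt (fun y => Real.log y + Real.log (1-y) + 2) (z⁻¹ - (1-z)⁻¹) z := by
    intro z hz
    have h1 : (z : ℝ) ≠ 0 := ne_of_gt (by linarith [hz.1])
    have h2 : (1 - z : ℝ) ≠ 0 := ne_of_gt (by linarith [hz.2])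
    have dinner : HasDerivAt (fun x : ℝ => 1 - x) (-1 : ℝ) z := by
      simpa using (hasDerivAt_id z).const_sub 1
    have d2 : HasDerivAt (fun x : ℝ => Real.log (1-x)) ((1-z)⁻¹ * (-1)) z :=
      (Real.hasDerivAt_log h2).comp z dinner
    have hd := ((Real.hasDerivAt_log h1).add d2).add_const 2
    refine hd.congr_deriv ?_
    ring
  have hfhalf : f (1/2) = 0 := by norm_num [hf]
  have hfone : f 1 = 0 := by norm_num [hf]
  have main : ∀ x ∈ Set.Icc (1/2 : ℝ) 1, 0 ≤ f x := by
    intro x hx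
    by_cases hcase : ∀ y ∈ Set.Ioo (1/2 : ℝ) x, 0 ≤ Real.log y + Real.log (1-y) + 2
    · have : f (1/2) ≤ f x :=
        mvt_mono hx.1 hfc.continuousOn
          (fun z hz => hf' z ⟨hz.1, lt_of_lt_of_le hz.2 hx.2⟩)
          (fun z hz => hcase z hz)
      exact hfhalf ▸ this
    · push_neg at hcase
      obtain ⟨y, hy, hPy⟩ := hcase
      have hy' : y ∈ Set.Ioo (1/2 : ℝ) 1 := ⟨hy.1, lt_of_lt_of_le hy.2 hx.2⟩
      have hneg : ∀ z ∈ Set.Ioo x 1, Real.log z + Real.log (1-z) + 2 ≤ 0 := by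
        intro z hz
        have hyz : y ≤ z := by linarith [hy.2, hz.1]
        have hmono : Real.log z + Real.log (1-z) + 2 ≤ Real.log y + Real.log (1-y) + 2 := by
          apply mvt_anti hyz
          · intro w hw
            have hw1 : (0:ℝ) < w := by linarith [hy'.1, hw.1]
            have hw2 : (0:ℝ) < 1 - w := by linarith [hw.2, hz.2]
            apply ContinuousAt.continuousWithinAt
            exact ((Real.continuousAt_log hw1.ne').add
              ((Real.continuousAt_log hw2.ne').comp
                ((continuous_const.sub continuous_id).continuousAt))).add continuousAt_const
          · intro w hw
            exact hf'' w ⟨lt_trans hy'.1 hw.1, lt_trans hw.2 hz.2⟩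
          · intro w hw
            have hw1half : 1/2 < w := by linarith [hy'.1, hw.1]
            have hw2 : w < 1 := by linarith [hw.2, hz.2]
            have h0 : (0:ℝ) < w := by linarith
            have h1 : (0:ℝ) < 1 - w := by linarith
            rw [sub_nonpos]
            apply inv_anti₀ h1
            linarith
        linarith
      have : f 1 ≤ f x :=
        mvt_anti hx.2 hfc.continuousOn
          (fun z hz => hf' z ⟨lt_of_le_of_lt hx.1 hz.1, hz.2⟩) hneg
      exact hfone ▸ this
  have hmain := main p ⟨hp, hp1⟩
  simp only [hf] at hmain
  linarith

private lemma clog_lemma {p : ℝ} (hp : 1/2 < p) (hp1 : p < 1) :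
    2*(p-(1-p)) ≤ Real.log p - Real.log (1-p) := by
  set F : ℝ → ℝ := fun x => Real.log x - Real.log (1-x) - 2*(2*x-1) with hF
  have key : F (1/2) ≤ F p := by
    apply mvt_mono hp.le (f' := fun x => x⁻¹ + (1-x)⁻¹ - 4)
    · intro x hx
      have h1 : (0:ℝ) < x := by rcases hx with ⟨h, _⟩; linarith
      have h2 : (0:ℝ) < 1 - x := by rcases hx with ⟨_, h⟩; linarith
      apply ContinuousAt.continuousWithinAt
      exact ((Real.continuousAt_log h1.ne').sub
        ((Real.continuousAt_log h2.ne').comp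
          ((continuous_const.sub continuous_id).continuousAt))).sub
        (by continuity : Continuous fun x : ℝ => 2*(2*x-1)).continuousAt
    · intro x hx
      have h1 : (0:ℝ) < x := by rcases hx with ⟨h, _⟩; linarith
      have h2 : (0:ℝ) < 1 - x := by rcases hx with ⟨_, h⟩; linarith
      have dinner : HasDerivAt (fun y : ℝ => 1 - y) (-1 : ℝ) x := by
        simpa using (hasDerivAt_id x).const_sub 1
      have d2 : HasDerivAt (fun y : ℝ => Real.log (1-y)) ((1-x)⁻¹ * (-1)) x :=
        (Real.hasDerivAt_log h2.ne').comp x dinner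
      have d3 : HasDerivAt (fun y : ℝ => 2*(2*y-1)) (4 : ℝ) x := by
        have := (((hasDerivAt_id x).const_mul 2).sub_const 1).const_mul 2
        refine this.congr_deriv ?_ ; ring
      have hd := ((Real.hasDerivAt_log h1.ne').sub d2).sub d3
      refine hd.congr_deriv ?_
      ring
    · intro x hx
      have h1 : (0:ℝ) < x := by rcases hx with ⟨h, _⟩; linarith
      have h2 : (0:ℝ) < 1 - x := by rcases hx with ⟨_, h⟩; linarith
      have heq : x⁻¹ + (1-x)⁻¹ - 4 = (2*x-1)^2 / (x*(1-x)) := by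
        field_simp
        ring
      rw [heq]
      positivity
  have hFhalf : F (1/2) = 0 := by norm_num [hF]
  simp only [hF] at key hFhalf
  linarith
private noncomputable def Gf (p q c : ℝ) : ℝ → ℝ := fun x =>
  c*p*q*(x-1)^2 - p*(x^2*Real.log (x^2)) + (p*x^2+q)*Real.log (p*x^2+q)

private noncomputable def Pf (p q c : ℝ) : ℝ → ℝ := fun x =>
  2*c*p*q*(x-1) - 2*p*(x*Real.log (x^2)) + 2*p*(x*Real.log (p*x^2+q))

private noncomputable def Sf (p q c : ℝ) : ℝ → ℝ := fun x =>
  2*c*p*q - 2*p*Real.log (x^2) + 2*p*Real.log (p*x^2+q) - 4*p*q*(p*x^2+q)⁻¹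

section derivs

variable {p q c : ℝ}

private lemma hD_pos (hp0 : 0 < p) (hq0 : 0 < q) (x : ℝ) : 0 < p*x^2 + q := by positivity

private lemma hasDerivAt_D (x : ℝ) : HasDerivAt (fun y : ℝ => p*y^2 + q) (p*(2*x)) x := by
  simpa using (((hasDerivAt_pow 2 x).const_mul p).add_const q)

private lemma hasDerivAt_sq (x : ℝ) : HasDerivAt (fun y : ℝ => y^2) (2*x) x := by
  simpa using hasDerivAt_pow 2 x

private lemma hasDerivAt_mullog_sq {x : ℝ} (hx : x ≠ 0) :
    HasDerivAt (fun y : ℝ => y^2 * Real.log (y^2)) ((Real.log (x^2) + 1) * (2*x)) x := by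
  have h : HasDerivAt ((fun u : ℝ => u * Real.log u) ∘ fun y : ℝ => y^2)
      ((Real.log (x^2) + 1) * (2*x)) x :=
    HasDerivAt.comp x (Real.hasDerivAt_mul_log (pow_ne_zero 2 hx)) (hasDerivAt_sq x)
  exact h

private lemma hasDerivAt_mullog_D (hp0 : 0 < p) (hq0 : 0 < q) (x : ℝ) :
    HasDerivAt (fun y : ℝ => (p*y^2+q) * Real.log (p*y^2+q))
      ((Real.log (p*x^2+q) + 1) * (p*(2*x))) x := by
  have h : HasDerivAt ((fun u : ℝ => u * Real.log u) ∘ fun y : ℝ => p*y^2+q)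
      ((Real.log (p*x^2+q) + 1) * (p*(2*x))) x :=
    HasDerivAt.comp x (Real.hasDerivAt_mul_log (hD_pos hp0 hq0 x).ne') (hasDerivAt_D x)
  exact h

private lemma hasDerivAt_log_sq {x : ℝ} (hx : x ≠ 0) :
    HasDerivAt (fun y : ℝ => Real.log (y^2)) ((x^2)⁻¹ * (2*x)) x := by
  have h : HasDerivAt (Real.log ∘ fun y : ℝ => y^2) ((x^2)⁻¹ * (2*x)) x :=
    HasDerivAt.comp x (Real.hasDerivAt_log (pow_ne_zero 2 hx)) (hasDerivAt_sq x)
  exact h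

private lemma hasDerivAt_log_D (hp0 : 0 < p) (hq0 : 0 < q) (x : ℝ) :
    HasDerivAt (fun y : ℝ => Real.log (p*y^2+q)) ((p*x^2+q)⁻¹ * (p*(2*x))) x := by
  have h : HasDerivAt (Real.log ∘ fun y : ℝ => p*y^2+q) ((p*x^2+q)⁻¹ * (p*(2*x))) x :=
    HasDerivAt.comp x (Real.hasDerivAt_log (hD_pos hp0 hq0 x).ne') (hasDerivAt_D x)
  exact h

private lemma hasDerivAt_Gf (hp0 : 0 < p) (hq0 : 0 < q) {x : ℝ} (hx : x ≠ 0) :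
    HasDerivAt (Gf p q c) (Pf p q c x) x := by
  have d1 : HasDerivAt (fun y : ℝ => c*p*q*(y-1)^2) (c*p*q*(2*(x-1))) x := by
    have h := (((hasDerivAt_id x).sub_const 1).pow 2).const_mul (c*p*q)
    refine h.congr_deriv ?_
    simp only [id_eq, pow_one]
    push_cast
    ring
  have hd := (d1.sub ((hasDerivAt_mullog_sq hx).const_mul p)).add
    (hasDerivAt_mullog_D hp0 hq0 x)
  refine hd.congr_deriv ?_
  simp only [Pf]
  ring

private lemma hasDerivAt_Pf (hp0 : 0 < p) (hq0 : 0 < q) {x : ℝ} (hx : x ≠ 0) :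
    HasDerivAt (Pf p q c) (Sf p q c x) x := by
  have hx2 : (x^2 : ℝ) ≠ 0 := pow_ne_zero 2 hx
  have hDne : (p*x^2+q : ℝ) ≠ 0 := (hD_pos hp0 hq0 x).ne'
  have d1 : HasDerivAt (fun y : ℝ => 2*c*p*q*(y-1)) (2*c*p*q) x := by
    have h := ((hasDerivAt_id x).sub_const 1).const_mul (2*c*p*q)
    refine h.congr_deriv ?_
    simp [id_eq]
  have d2 : HasDerivAt (fun y : ℝ => y * Real.log (y^2))
      (1 * Real.log (x^2) + x * ((x^2)⁻¹ * (2*x))) x :=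
    (hasDerivAt_id x).mul (hasDerivAt_log_sq hx)
  have d3 : HasDerivAt (fun y : ℝ => y * Real.log (p*y^2+q))
      (1 * Real.log (p*x^2+q) + x * ((p*x^2+q)⁻¹ * (p*(2*x)))) x :=
    (hasDerivAt_id x).mul (hasDerivAt_log_D hp0 hq0 x)
  have hd := (d1.sub (d2.const_mul (2*p))).add (d3.const_mul (2*p))
  refine hd.congr_deriv ?_
  simp only [Sf]
  field_simp
  ring

private lemma hasDerivAt_Sf (hp0 : 0 < p) (hq0 : 0 < q) {x : ℝ} (hx : x ≠ 0) :
    HasDerivAt (Sf p q c) (4*p*q*(p*x^2-q) / (x*(p*x^2+q)^2)) x := by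
  have hx2 : (x^2 : ℝ) ≠ 0 := pow_ne_zero 2 hx
  have hDne : (p*x^2+q : ℝ) ≠ 0 := (hD_pos hp0 hq0 x).ne'
  have dinv : HasDerivAt (fun y : ℝ => (p*y^2+q)⁻¹) (-(p*(2*x)) / (p*x^2+q)^2) x :=
    (hasDerivAt_D x).inv hDne
  have hd := ((((hasDerivAt_log_sq hx).const_mul (2*p)).const_sub (2*c*p*q)).add
      ((hasDerivAt_log_D hp0 hq0 x).const_mul (2*p))).sub (dinv.const_mul (4*p*q))
  refine hd.congr_deriv ?_
  field_simp
  ring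

private lemma cont_Gf : Continuous (Gf p q c) := by
  have h1 : Continuous fun x : ℝ => (x^2) * Real.log (x^2) :=
    Real.continuous_mul_log.comp (continuous_pow 2)
  have h2 : Continuous fun x : ℝ => (p*x^2+q) * Real.log (p*x^2+q) :=
    Real.continuous_mul_log.comp (by continuity)
  exact ((by continuity : Continuous fun x : ℝ => c*p*q*(x-1)^2).sub
    (continuous_const.mul h1)).add h2

private lemma contAt_log_sq {x : ℝ} (hx : x ≠ 0) :
    ContinuousAt (fun y : ℝ => Real.log (y^2)) x := by
  have h : ContinuousAt (Real.log ∘ fun y : ℝ => y^2) x :=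
    ContinuousAt.comp (Real.continuousAt_log (pow_ne_zero 2 hx))
      (continuous_pow 2).continuousAt
  exact h

private lemma contAt_log_D (hp0 : 0 < p) (hq0 : 0 < q) (x : ℝ) :
    ContinuousAt (fun y : ℝ => Real.log (p*y^2+q)) x := by
  have h : ContinuousAt (Real.log ∘ fun y : ℝ => p*y^2+q) x :=
    ContinuousAt.comp (Real.continuousAt_log (hD_pos hp0 hq0 x).ne')
      (by fun_prop : Continuous fun y : ℝ => p*y^2+q).continuousAt
  exact h

private lemma contAt_Pf (hp0 : 0 < p) (hq0 : 0 < q) {x : ℝ} (hx : x ≠ 0) :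
    ContinuousAt (Pf p q c) x := by
  exact (((by fun_prop : Continuous fun y : ℝ => 2*c*p*q*(y-1)).continuousAt).sub
    (continuousAt_const.mul (continuousAt_id.mul (contAt_log_sq hx)))).add
    (continuousAt_const.mul (continuousAt_id.mul (contAt_log_D hp0 hq0 x)))

private lemma contAt_Sf (hp0 : 0 < p) (hq0 : 0 < q) {x : ℝ} (hx : x ≠ 0) :
    ContinuousAt (Sf p q c) x := by
  have c3 : ContinuousAt (fun y : ℝ => (p*y^2+q)⁻¹) x :=
    ((by fun_prop : Continuous fun y : ℝ => p*y^2+q).continuousAt).inv₀ (hD_pos hp0 hq0 x).ne'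
  exact ((continuousAt_const.sub (continuousAt_const.mul (contAt_log_sq hx))).add
    (continuousAt_const.mul (contAt_log_D hp0 hq0 x))).sub (continuousAt_const.mul c3)

end derivs
set_option maxHeartbeats 1000000 in
private lemma core_one_var {p q c : ℝ} (hq : q = 1 - p) (hp : 1/2 ≤ p) (hp1 : p < 1)
    (hc : Real.log p - Real.log q = c * (p - q)) (hc2 : 2 ≤ c) :
    ∀ a : ℝ, 0 ≤ a → 0 ≤ Gf p q c a := by
  subst hq
  have hp0 : 0 < p := by linarith
  have hq0 : 0 < (1-p) := by linarith
  obtain ⟨r, hrdef⟩ : ∃ r : ℝ, r = (1-p)/p := ⟨_, rfl⟩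
  have hr0 : 0 < r := hrdef ▸ div_pos hq0 hp0
  have hr1 : r ≤ 1 := by rw [hrdef, div_le_one hp0]; linarith
  have hpr : p * r = 1 - p := by rw [hrdef]; field_simp
  obtain ⟨s, hsdef⟩ : ∃ s : ℝ, s = Real.sqrt r := ⟨_, rfl⟩
  have hs0 : 0 < s := hsdef ▸ Real.sqrt_pos.mpr hr0
  have hs2 : s^2 = r := by rw [hsdef, sq, Real.mul_self_sqrt hr0.le]
  have hs1 : s ≤ 1 := by rw [hsdef]; exact Real.sqrt_le_one.mpr hr1
  have hrs : r ≤ s := by nlinarith [mul_nonneg hs0.le (sub_nonneg.mpr hs1), hs2]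
  -- log values at r
  have hlogr : Real.log r = -(c*(p-(1-p))) := by
    rw [hrdef, Real.log_div hq0.ne' hp0.ne']; linarith [hc]
  have hlogr2 : Real.log (r^2) = -(2*(c*(p-(1-p)))) := by
    rw [Real.log_pow, hlogr]; push_cast; ring
  have hDr : p*r^2 + (1-p) = r := by rw [hrdef]; field_simp; ring
  -- values at r
  have hGr : Gf p (1-p) c r = 0 := by
    simp only [Gf]
    rw [hDr, hlogr2, hlogr, hrdef]
    field_simp
    ring
  have hPr : Pf p (1-p) c r = 0 := by
    simp only [Pf]
    rw [hDr, hlogr2, hlogr, hrdef]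
    field_simp
    ring
  have hSr : Sf p (1-p) c r = 2*p^2*(c-2) := by
    simp only [Sf]
    rw [hDr, hlogr2, hlogr, hrdef]
    field_simp
    ring
  -- values at 1
  have e1 : p*(1:ℝ)^2 + (1-p) = 1 := by ring
  have hG1 : Gf p (1-p) c 1 = 0 := by
    simp only [Gf]; rw [e1, one_pow, Real.log_one]; ring
  have hP1 : Pf p (1-p) c 1 = 0 := by
    simp only [Pf]; rw [e1, one_pow, Real.log_one]; ring
  have hS1 : Sf p (1-p) c 1 = 2*p*(1-p)*(c-2) := by
    simp only [Sf]; rw [e1, one_pow, Real.log_one]; norm_num; ring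
  have hSr0 : 0 ≤ Sf p (1-p) c r := by rw [hSr]; nlinarith
  have hS10 : 0 ≤ Sf p (1-p) c 1 := by rw [hS1]; nlinarith
  -- the key positivity of c*p + log(1-p)
  have hcp : 0 ≤ c*p + Real.log (1-p) := by
    rcases eq_or_lt_of_le hp with heq | hlt
    · have hhalf : (1 : ℝ) - p = 1/2 := by rw [← heq]; norm_num
      rw [hhalf, ← heq]
      have hlog : Real.log (1/2 : ℝ) = -Real.log 2 := by
        rw [one_div, Real.log_inv]
      rw [hlog]
      linarith [Real.log_two_lt_d9]
    · have hplog := plog_lemma hp hp1.le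
      have hkey : (c*p + Real.log (1-p)) * (p - (1-p)) =
          p*Real.log p - (1-p)*Real.log (1-p) := by linear_combination (-p) * hc
      by_contra hneg
      push_neg at hneg
      nlinarith [hkey, hplog]
  have hcq : 0 ≤ c*(1-p) + Real.log p := by linarith [hc, hcp]
  have hG0 : 0 ≤ Gf p (1-p) c 0 := by
    simp only [Gf]
    norm_num [Real.log_zero]
    nlinarith [mul_nonneg hq0.le hcp]
  -- continuity packaging
  have hScont : ∀ {A B : ℝ}, 0 < A → ContinuousOn (Sf p (1-p) c) (Set.Icc A B) :=
    fun {A B} hA x hx =>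
      (contAt_Sf hp0 hq0 (ne_of_gt (lt_of_lt_of_le hA hx.1))).continuousWithinAt
  have hPcont : ∀ {A B : ℝ}, 0 < A → ContinuousOn (Pf p (1-p) c) (Set.Icc A B) :=
    fun {A B} hA x hx =>
      (contAt_Pf hp0 hq0 (ne_of_gt (lt_of_lt_of_le hA hx.1))).continuousWithinAt
  -- sign of the third derivative
  have hSd_neg : ∀ z : ℝ, 0 < z → z ≤ s →
      4*p*(1-p)*(p*z^2-(1-p)) / (z*(p*z^2+(1-p))^2) ≤ 0 := by
    intro z hz0 hzs
    apply div_nonpos_of_nonpos_of_nonneg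
    · have hz2 : z^2 ≤ r := by
        nlinarith [mul_nonneg (sub_nonneg.mpr hzs) (add_pos hs0 hz0).le, hs2]
      have h1 : p*z^2 - (1-p) ≤ 0 := by
        nlinarith [mul_le_mul_of_nonneg_left hz2 hp0.le, hpr]
      nlinarith [mul_pos hp0 hq0, h1]
    · positivity
  have hSd_pos : ∀ z : ℝ, s ≤ z →
      0 ≤ 4*p*(1-p)*(p*z^2-(1-p)) / (z*(p*z^2+(1-p))^2) := by
    intro z hzs
    have hz0 : 0 < z := lt_of_lt_of_le hs0 hzs
    apply div_nonneg
    · have hz2 : r ≤ z^2 := by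
        nlinarith [mul_nonneg (sub_nonneg.mpr hzs) (add_pos hs0 hz0).le, hs2]
      have h1 : 0 ≤ p*z^2 - (1-p) := by
        nlinarith [mul_le_mul_of_nonneg_left hz2 hp0.le, hpr]
      nlinarith [mul_pos hp0 hq0, h1]
    · positivity
  -- left region
  have hS_left : ∀ x : ℝ, 0 < x → x ≤ r → 0 ≤ Sf p (1-p) c x := by
    intro x hx hxr
    have h : Sf p (1-p) c r ≤ Sf p (1-p) c x := by
      apply mvt_anti hxr (hScont hx)
        (fun z hz => hasDerivAt_Sf hp0 hq0 (ne_of_gt (lt_trans hx hz.1)))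
      intro z hz
      exact hSd_neg z (lt_trans hx hz.1) (le_trans hz.2.le hrs)
    linarith [hSr0]
  have hP_left : ∀ x : ℝ, 0 < x → x ≤ r → Pf p (1-p) c x ≤ 0 := by
    intro x hx hxr
    have h : Pf p (1-p) c x ≤ Pf p (1-p) c r := by
      apply mvt_mono hxr (hPcont hx)
        (fun z hz => hasDerivAt_Pf hp0 hq0 (ne_of_gt (lt_trans hx hz.1)))
      intro z hz
      exact hS_left z (lt_trans hx hz.1) hz.2.le
    linarith [hPr ▸ h]
  have hG_left : ∀ x : ℝ, 0 < x → x ≤ r → 0 ≤ Gf p (1-p) c x := by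
    intro x hx hxr
    have h : Gf p (1-p) c r ≤ Gf p (1-p) c x := by
      apply mvt_anti hxr cont_Gf.continuousOn
        (fun z hz => hasDerivAt_Gf hp0 hq0 (ne_of_gt (lt_trans hx hz.1)))
      intro z hz
      exact hP_left z (lt_trans hx hz.1) hz.2.le
    linarith [hGr ▸ h]
  -- right region
  have hS_right : ∀ x : ℝ, 1 ≤ x → 0 ≤ Sf p (1-p) c x := by
    intro x hx
    have h : Sf p (1-p) c 1 ≤ Sf p (1-p) c x := by
      apply mvt_mono hx (hScont one_pos)
        (fun z hz => hasDerivAt_Sf hp0 hq0 (ne_of_gt (lt_trans one_pos hz.1)))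
      intro z hz
      exact hSd_pos z (le_trans hs1 hz.1.le)
    linarith [hS10]
  have hP_right : ∀ x : ℝ, 1 ≤ x → 0 ≤ Pf p (1-p) c x := by
    intro x hx
    have h : Pf p (1-p) c 1 ≤ Pf p (1-p) c x := by
      apply mvt_mono hx (hPcont one_pos)
        (fun z hz => hasDerivAt_Pf hp0 hq0 (ne_of_gt (lt_trans one_pos hz.1)))
      intro z hz
      exact hS_right z hz.1.le
    linarith [hP1 ▸ h]
  have hG_right : ∀ x : ℝ, 1 ≤ x → 0 ≤ Gf p (1-p) c x := by
    intro x hx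
    have h : Gf p (1-p) c 1 ≤ Gf p (1-p) c x := by
      apply mvt_mono hx cont_Gf.continuousOn
        (fun z hz => hasDerivAt_Gf hp0 hq0 (ne_of_gt (lt_trans one_pos hz.1)))
      intro z hz
      exact hP_right z hz.1.le
    linarith [hG1 ▸ h]
  -- middle region
  have hmid : ∀ x ∈ Set.Icc r 1, 0 ≤ Gf p (1-p) c x := by
    apply middle_nonneg hrs hs1 cont_Gf.continuousOn
      (fun x hx => hasDerivAt_Gf hp0 hq0 (ne_of_gt (lt_trans hr0 hx.1)))
      (hPcont hr0)
      (fun x hx => hasDerivAt_Pf hp0 hq0 (ne_of_gt (lt_trans hr0 hx.1)))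
      ?hanti ?hmono hPr hP1 (le_of_eq hGr.symm) (le_of_eq hG1.symm)
    case hanti =>
      intro x hx y hy hxy
      apply mvt_anti hxy (hScont (lt_of_lt_of_le hr0 hx.1))
        (fun z hz => hasDerivAt_Sf hp0 hq0 (ne_of_gt (lt_trans (lt_of_lt_of_le hr0 hx.1) hz.1)))
      intro z hz
      exact hSd_neg z (lt_trans (lt_of_lt_of_le hr0 hx.1) hz.1) (le_trans hz.2.le hy.2)
    case hmono =>
      intro x hx y hy hxy
      apply mvt_mono hxy (hScont (lt_of_lt_of_le hs0 hx.1))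
        (fun z hz => hasDerivAt_Sf hp0 hq0 (ne_of_gt (lt_trans (lt_of_lt_of_le hs0 hx.1) hz.1)))
      intro z hz
      exact hSd_pos z (le_trans hx.1 hz.1.le)
  -- assemble
  intro a ha
  rcases eq_or_lt_of_le ha with h0 | h0
  · rw [← h0]; exact hG0
  · rcases le_total a r with h1 | h1
    · exact hG_left a h0 h1
    · rcases le_total a 1 with h2 | h2
      · exact hmid a ⟨h1, h2⟩
      · exact hG_right a h2
private lemma core_two_var {p q c : ℝ} (hq : q = 1 - p) (hp : 1/2 ≤ p) (hp1 : p < 1)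
    (hc : Real.log p - Real.log q = c * (p - q)) (hc2 : 2 ≤ c) (a b : ℝ) :
    p*(a^2*Real.log (a^2)) + q*(b^2*Real.log (b^2))
      - (p*a^2 + q*b^2) * Real.log (p*a^2 + q*b^2) ≤ c*p*q*(a-b)^2 := by
  have hp0 : 0 < p := by linarith
  have hq0 : 0 < q := by rw [hq]; linarith
  have hcp : 0 ≤ c*p + Real.log q := by
    -- extract from core at a = 0 is messy; rederive
    subst hq
    rcases eq_or_lt_of_le hp with heq | hlt
    · have hhalf : (1 : ℝ) - p = 1/2 := by rw [← heq]; norm_num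
      rw [hhalf, ← heq]
      have hlog : Real.log (1/2 : ℝ) = -Real.log 2 := by rw [one_div, Real.log_inv]
      rw [hlog]
      linarith [Real.log_two_lt_d9]
    · have hplog := plog_lemma hp hp1.le
      have hkey : (c*p + Real.log (1-p)) * (p - (1-p)) =
          p*Real.log p - (1-p)*Real.log (1-p) := by linear_combination (-p) * hc
      by_contra hneg
      push_neg at hneg
      nlinarith [hkey, hplog]
  have hcq : 0 ≤ c*q + Real.log p := by
    have : c*q + Real.log p - (c*p + Real.log q) = -(c*(p-q)) + (Real.log p - Real.log q) := by
      ring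
    linarith [hc, hcp]
  -- main inequality for nonnegative arguments
  have main : ∀ x y : ℝ, 0 ≤ x → 0 ≤ y →
      p*(x^2*Real.log (x^2)) + q*(y^2*Real.log (y^2))
        - (p*x^2 + q*y^2) * Real.log (p*x^2 + q*y^2) ≤ c*p*q*(x-y)^2 := by
    intro x y hx hy
    rcases eq_or_lt_of_le hy with hy0 | hy0
    · -- y = 0
      rw [← hy0]
      rcases eq_or_lt_of_le hx with hx0 | hx0
      · rw [← hx0]; norm_num
      · have hx2 : (x^2 : ℝ) ≠ 0 := by positivity
        have hlog : Real.log (p*x^2 + q*0^2) = Real.log p + Real.log (x^2) := by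
          rw [show p*x^2 + q*0^2 = p*x^2 by ring, Real.log_mul hp0.ne' hx2]
        rw [hlog]
        have hmul := mul_nonneg (mul_nonneg hcq (by positivity : (0:ℝ) ≤ p)) (sq_nonneg x)
        nlinarith [hmul]
    · rcases eq_or_lt_of_le hx with hx0 | hx0
      · -- x = 0
        rw [← hx0]
        have hy2 : (y^2 : ℝ) ≠ 0 := by positivity
        have hlog : Real.log (p*0^2 + q*y^2) = Real.log q + Real.log (y^2) := by
          rw [show p*0^2 + q*y^2 = q*y^2 by ring, Real.log_mul hq0.ne' hy2]
        rw [hlog]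
        have hmul := mul_nonneg (mul_nonneg hcp (by positivity : (0:ℝ) ≤ q)) (sq_nonneg y)
        nlinarith [hmul]
      · -- both positive: scale by y
        have hG := core_one_var hq hp hp1 hc hc2 (x/y) (by positivity)
        simp only [Gf] at hG
        have ht2 : ((x/y)^2 : ℝ) ≠ 0 := by positivity
        have hy2 : (y^2 : ℝ) ≠ 0 := by positivity
        have hDt : (0:ℝ) < p*(x/y)^2 + q := by positivity
        have e1 : Real.log (x^2) = Real.log ((x/y)^2) + Real.log (y^2) := by
          rw [← Real.log_mul ht2 hy2]
          congr 1
          field_simp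
        have e2 : Real.log (p*x^2 + q*y^2) =
            Real.log (p*(x/y)^2 + q) + Real.log (y^2) := by
          rw [← Real.log_mul hDt.ne' hy2]
          congr 1
          field_simp
          try ring
        have hscale := mul_le_mul_of_nonneg_left hG (sq_nonneg y)
        have e4 : x^2 = (x/y)^2 * y^2 := by field_simp
        have e5 : (x-y)^2 = (x/y - 1)^2 * y^2 := by field_simp
        rw [e1, e2, e4, e5]
        nlinarith [hscale]
  -- reduce the general case to nonnegative arguments
  have habs := main |a| |b| (abs_nonneg a) (abs_nonneg b)
  simp only [sq_abs] at habs
  have hsub : (|a| - |b|)^2 ≤ (a-b)^2 := by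
    have h1 := abs_sub_abs_le_abs_sub a b
    have h2 := neg_abs_le (a - b)
    have h3 := abs_nonneg (a - b)
    nlinarith [sq_abs (a-b), abs_le.mp (abs_abs_sub_abs_le_abs_sub a b)]
  have hfinal : c*p*q*(|a|-|b|)^2 ≤ c*p*q*(a-b)^2 := by
    apply mul_le_mul_of_nonneg_left hsub
    positivity
  linarith [habs, hfinal]
/-- The entropy `Ent_μ(f) = ∫ f log f dμ − (∫ f dμ) log(∫ f dμ)` (real-valued). -/
noncomputable def entR {Ω : Type*} [MeasurableSpace Ω] (μ : Measure Ω) (f : Ω → ℝ) : ℝ :=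
  (∫ x, f x * Real.log (f x) ∂μ) - (∫ x, f x ∂μ) * Real.log (∫ x, f x ∂μ)

/-- Logarithmic Sobolev inequality on the two-point space `{−1, +1}` (modelled by `Bool`,
`true ↔ +1`, `false ↔ −1`) with the Bernoulli measure of parameter `p`:
`Ent_{μ_p}(f²) ≤ (1/ρ) p q (f(+1) − f(−1))²` where `q = 1 − p` and
`ρ = (p − q)/(log p − log q)` (with `ρ = 1/2` when `p = 1/2`). -/
theorem two_point_logSobolev (p : ℝ) (hp0 : 0 < p) (hp1 : p < 1)
    (μ : Measure Bool) [IsProbabilityMeasure μ] (hμ : μ {true} = ENNReal.ofReal p)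
    (f : Bool → ℝ) :
    entR μ (fun x => (f x) ^ 2) ≤
      (1 / (if p = 1 / 2 then 1 / 2
            else (p - (1 - p)) / (Real.log p - Real.log (1 - p)))) *
        (p * (1 - p)) * (f true - f false) ^ 2 := by
  have hq0 : (0:ℝ) < 1 - p := by linarith
  have hcompl : ({true} : Set Bool)ᶜ = {false} := by
    ext b; cases b <;> simp
  have hμf : μ {false} = ENNReal.ofReal (1-p) := by
    rw [← hcompl, measure_compl (measurableSet_singleton true) (measure_ne_top μ _),
      measure_univ, hμ, ← ENNReal.ofReal_one, ← ENNReal.ofReal_sub 1 hp0.le]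
  have hint : ∀ g : Bool → ℝ, ∫ x, g x ∂μ = (1-p) * g false + p * g true := by
    intro g
    rw [integral_fintype (Integrable.of_finite)]
    simp [Fintype.sum_bool, Measure.real, hμ, hμf, ENNReal.toReal_ofReal hp0.le,
      ENNReal.toReal_ofReal hq0.le]
    ring
  have hent : entR μ (fun x => (f x) ^ 2) =
      p*((f true)^2*Real.log ((f true)^2)) + (1-p)*((f false)^2*Real.log ((f false)^2))
        - (p*(f true)^2 + (1-p)*(f false)^2) *
            Real.log (p*(f true)^2 + (1-p)*(f false)^2) := by
    unfold entR
    rw [hint (fun x => (f x)^2 * Real.log ((f x)^2)), hint (fun x => (f x)^2)]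
    have harg : (1-p) * (f false)^2 + p * (f true)^2
        = p*(f true)^2 + (1-p)*(f false)^2 := by ring
    rw [harg]
    ring
  by_cases hphalf : p = 1/2
  · rw [if_pos hphalf, hent]
    have h2 : (1 : ℝ) / (1/2 : ℝ) = 2 := by norm_num
    rw [h2]
    have hkey := core_two_var (p := p) (q := 1-p) (c := 2) rfl (le_of_eq hphalf.symm) hp1
      (by rw [hphalf]; norm_num) le_rfl (f true) (f false)
    nlinarith [hkey]
  · rw [if_neg hphalf, hent, one_div_div]
    set c : ℝ := (Real.log p - Real.log (1-p)) / (p - (1-p)) with hcdef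
    have hpq : p - (1-p) ≠ 0 := by
      intro h
      exact hphalf (by linarith)
    have hc : Real.log p - Real.log (1-p) = c * (p - (1-p)) := by
      rw [hcdef, div_mul_cancel₀ _ hpq]
    rcases lt_trichotomy p (1/2) with hlt | heq | hgt
    · -- p < 1/2 : apply the core lemma with the roles of p and 1-p swapped
      have hclog := clog_lemma (p := 1-p) (by linarith) (by linarith)
      have e : (1:ℝ) - (1-p) = p := by ring
      rw [e] at hclog
      have hc2 : 2 ≤ c := by
        have hflip : c = (Real.log (1-p) - Real.log p) / ((1-p) - p) := by
          rw [hcdef, ← neg_div_neg_eq]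
          congr 1 <;> ring
        rw [hflip, le_div_iff₀ (by linarith : (0:ℝ) < (1-p) - p)]
        linarith
      have hkey := core_two_var (p := 1-p) (q := p) (c := c) (by ring) (by linarith)
        (by linarith) (by linarith [hc]) hc2 (f false) (f true)
      have harg2 : (1-p)*(f false)^2 + p*(f true)^2
          = p*(f true)^2 + (1-p)*(f false)^2 := by ring
      rw [harg2] at hkey
      nlinarith [hkey]
    · exact absurd heq hphalf
    · -- p > 1/2
      have hclog := clog_lemma hgt hp1
      have hc2 : 2 ≤ c := by
        rw [hcdef, le_div_iff₀ (by linarith : (0:ℝ) < p - (1-p))]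
        linarith
      have hkey := core_two_var (p := p) (q := 1-p) (c := c) rfl hgt.le hp1 hc hc2
        (f true) (f false)
      nlinarith [hkey]
end

section
/- (Sup-of-weighted-Hamming description of the convex distance.) Let X = Ω_1 × ⋯ × Ω_n be a product of sets, let A ⊆ X be non-empty and let x ∈ X. Let U_A(x) = { (1_{x_1 ≠ y_1}, …, 1_{x_n ≠ y_n}) ∈ ℝ^n : y ∈ A }, let V_A(x) be the convex hull of U_A(x) in ℝ^n and let d_A(x) be the Euclidean distance from 0 to V_A(x). For a ∈ [0, ∞)^n define d_a(x, A) = inf_{y ∈ A} Σ_{i=1}^n a_i 1_{x_i ≠ y_i}. Then d_A(x) = sup { d_a(x, A) : a ∈ [0, ∞)^n, |a| = 1 }, where |a| is the Euclidean norm of a. -/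
open MeasureTheory
open scoped Classical
open scoped RealInnerProductSpace

/-- Talagrand's convex distance: the Euclidean distance in `ℝ^n` from the origin to the
convex hull of the set of indicator vectors `{ (1_{x_i ≠ y_i})_{1 ≤ i ≤ n} : y ∈ A }`. -/
noncomputable def convexDist {n : ℕ} {Ω : Fin n → Type*}
    (A : Set (∀ i, Ω i)) (x : ∀ i, Ω i) : ℝ :=
  Metric.infDist 0 (convexHull ℝ
    {s : EuclideanSpace ℝ (Fin n) | ∃ y ∈ A, ∀ i, s i = if x i ≠ y i then 1 else 0})

/-- The convex distance `d_A(x)` equals the supremum, over all weights `a ∈ [0, ∞)^n` with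
Euclidean norm `1`, of the weighted Hamming distances
`d_a(x, A) = inf_{y ∈ A} Σ_i a_i 1_{x_i ≠ y_i}`. -/
theorem convexDist_eq_sup_weighted_hamming {n : ℕ} {Ω : Fin n → Type*}
    (A : Set (∀ i, Ω i)) (hA : A.Nonempty) (x : ∀ i, Ω i) :
    convexDist A x =
      sSup {r : ℝ | ∃ a : Fin n → ℝ, (∀ i, 0 ≤ a i) ∧ (∑ i, (a i) ^ 2 = 1) ∧
        r = sInf {s : ℝ | ∃ y ∈ A, s = ∑ i, a i * (if x i ≠ y i then 1 else 0)}} := by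
  classical
  rw [convexDist]
  set U : Set (EuclideanSpace ℝ (Fin n)) :=
    {s | ∃ y ∈ A, ∀ i, s i = if x i ≠ y i then 1 else 0} with hUdef
  set V := convexHull ℝ U with hVdef
  set T : Set ℝ := {r : ℝ | ∃ a : Fin n → ℝ, (∀ i, 0 ≤ a i) ∧ (∑ i, (a i) ^ 2 = 1) ∧
        r = sInf {s : ℝ | ∃ y ∈ A, s = ∑ i, a i * (if x i ≠ y i then 1 else 0)}} with hTdef
  obtain ⟨y₀, hy₀⟩ := hA
  have hUne : U.Nonempty :=
    ⟨(WithLp.toLp 2 (fun i => if x i ≠ y₀ i then 1 else 0) : EuclideanSpace ℝ (Fin n)),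
      ⟨y₀, hy₀, fun i => rfl⟩⟩
  have hUfin : U.Finite := by
    have hsub : U ⊆ WithLp.ofLp ⁻¹' Set.pi Set.univ (fun _ : Fin n => ({0, 1} : Set ℝ)) := by
      rintro u ⟨y, _, hu⟩ i _
      rw [hu i]
      split <;> simp
    exact Set.Finite.subset ((Set.Finite.pi fun _ => (Set.finite_singleton 1).insert 0).preimage
      (fun a _ b _ h => WithLp.ofLp_injective (p := 2) h)) hsub
  have hVconv : Convex ℝ V := convex_convexHull ℝ U
  have hVcpt : IsCompact V := hUfin.isCompact_convexHull ℝ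
  have hVne : V.Nonempty := hUne.mono (subset_convexHull ℝ U)
  obtain ⟨p, hpV, hpd⟩ := hVcpt.exists_infDist_eq_dist hVne 0
  have hdp : Metric.infDist 0 V = ‖p‖ := by rw [hpd, dist_zero_left]
  -- inner product formula on EuclideanSpace
  have hinner : ∀ v u : EuclideanSpace ℝ (Fin n), ⟪v, u⟫ = ∑ i, v i * u i := by
    intro v u
    simp [PiLp.inner_apply, RCLike.inner_apply]
    exact Finset.sum_congr rfl fun i _ => mul_comm _ _
  -- projection inequality
  have hproj : ∀ v ∈ V, ‖p‖ ^ 2 ≤ ⟪p, v⟫ := by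
    have h1 : ‖(0 : EuclideanSpace ℝ (Fin n)) - p‖
        = ⨅ w : V, ‖(0 : EuclideanSpace ℝ (Fin n)) - (w : EuclideanSpace ℝ (Fin n))‖ := by
      rw [Metric.infDist_eq_iInf] at hpd
      simp only [dist_eq_norm] at hpd
      rw [← hpd]
    have h2 := (norm_eq_iInf_iff_real_inner_le_zero hVconv hpV).mp h1
    intro v hv
    have h3 := h2 v hv
    have hp2 : ⟪p, p⟫ = ‖p‖ ^ 2 := real_inner_self_eq_norm_sq p
    rw [zero_sub, inner_neg_left, inner_sub_right] at h3
    linarith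
  -- coordinates of p are nonnegative
  have hpnn : ∀ i, 0 ≤ p i := by
    have hsub : V ⊆ {v : EuclideanSpace ℝ (Fin n) | ∀ i, 0 ≤ v i} := by
      rw [hVdef]
      apply convexHull_min
      · rintro u ⟨y, _, hu⟩ i
        rw [hu i]
        split <;> norm_num
      · intro v hv w hw s t hs ht _ i
        have hst : (s • v + t • w) i = s * v i + t * w i := rfl
        rw [hst]
        exact add_nonneg (mul_nonneg hs (hv i)) (mul_nonneg ht (hw i))
    exact hsub hpV
  -- every element of T is ≤ ‖p‖
  have hkey : ∀ r ∈ T, r ≤ ‖p‖ := by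
    rintro r ⟨a, ha0, ha1, rfl⟩
    set S : Set ℝ := {s : ℝ | ∃ y ∈ A, s = ∑ i, a i * (if x i ≠ y i then 1 else 0)} with hSdef
    have hSne : S.Nonempty := ⟨_, y₀, hy₀, rfl⟩
    have hSbd : BddBelow S := by
      refine ⟨0, ?_⟩
      rintro s ⟨y, _, rfl⟩
      apply Finset.sum_nonneg
      intro i _
      exact mul_nonneg (ha0 i) (by split <;> norm_num)
    set a' : EuclideanSpace ℝ (Fin n) := (WithLp.equiv 2 (Fin n → ℝ)).symm a with ha'def
    have ha'eq : ∀ i, a' i = a i := fun i => rfl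
    have hna : ‖a'‖ = 1 := by
      rw [EuclideanSpace.norm_eq]
      have : ∑ i, ‖a' i‖ ^ 2 = 1 := by
        rw [← ha1]
        exact Finset.sum_congr rfl fun i _ => by rw [ha'eq, Real.norm_eq_abs, sq_abs]
      rw [this, Real.sqrt_one]
    have hhalf : V ⊆ {v : EuclideanSpace ℝ (Fin n) | sInf S ≤ ⟪a', v⟫} := by
      rw [hVdef]
      apply convexHull_min
      · rintro u ⟨y, hy, hu⟩
        have heq : ⟪a', u⟫ = ∑ i, a i * (if x i ≠ y i then 1 else 0) := by
          rw [hinner]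
          exact Finset.sum_congr rfl fun i _ => by rw [ha'eq, hu i]
        show sInf S ≤ ⟪a', u⟫
        rw [heq]
        exact csInf_le hSbd ⟨y, hy, rfl⟩
      · exact convex_halfSpace_ge
          ⟨fun u v => inner_add_right a' u v, fun c v => real_inner_smul_right a' v c⟩ _
    calc sInf S ≤ ⟪a', p⟫ := hhalf hpV
      _ ≤ ‖a'‖ * ‖p‖ := real_inner_le_norm a' p
      _ = ‖p‖ := by rw [hna, one_mul]
  rw [hdp]
  apply le_antisymm
  · -- ‖p‖ ≤ sSup T
    have hTbdd : BddAbove T := ⟨‖p‖, hkey⟩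
    by_cases hp0 : p = 0
    · rw [hp0, norm_zero]
      apply Real.sSup_nonneg
      rintro r ⟨a, ha0, ha1, rfl⟩
      refine le_csInf ⟨_, y₀, hy₀, rfl⟩ ?_
      rintro s ⟨y, _, rfl⟩
      apply Finset.sum_nonneg
      intro i _
      exact mul_nonneg (ha0 i) (by split <;> norm_num)
    · have hpn : 0 < ‖p‖ := norm_pos_iff.mpr hp0
      set a : Fin n → ℝ := fun i => ‖p‖⁻¹ * p i with hadef
      have ha0 : ∀ i, 0 ≤ a i := fun i => mul_nonneg (inv_nonneg.mpr hpn.le) (hpnn i)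
      have hnp : ∑ i, (p i) ^ 2 = ‖p‖ ^ 2 := by
        rw [EuclideanSpace.norm_eq, Real.sq_sqrt (by positivity)]
        exact Finset.sum_congr rfl fun i _ => by rw [Real.norm_eq_abs, sq_abs]
      have ha1 : ∑ i, (a i) ^ 2 = 1 := by
        have : ∑ i, (a i) ^ 2 = ‖p‖⁻¹ ^ 2 * ∑ i, (p i) ^ 2 := by
          rw [Finset.mul_sum]
          exact Finset.sum_congr rfl fun i _ => by simp only [hadef]; ring
        rw [this, hnp]
        field_simp
      set S : Set ℝ := {s : ℝ | ∃ y ∈ A, s = ∑ i, a i * (if x i ≠ y i then 1 else 0)} with hSdef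
      have hmem : sInf S ∈ T := ⟨a, ha0, ha1, rfl⟩
      have hle : ‖p‖ ≤ sInf S := by
        refine le_csInf ⟨_, y₀, hy₀, rfl⟩ ?_
        rintro s ⟨y, hy, rfl⟩
        set u : EuclideanSpace ℝ (Fin n) :=
          (WithLp.equiv 2 (Fin n → ℝ)).symm (fun i => if x i ≠ y i then 1 else 0) with hudef
        have huU : u ∈ U := ⟨y, hy, fun i => rfl⟩
        have huV : u ∈ V := subset_convexHull ℝ U huU
        have h1 : ∑ i, a i * (if x i ≠ y i then 1 else 0) = ‖p‖⁻¹ * ⟪p, u⟫ := by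
          rw [hinner, Finset.mul_sum]
          refine Finset.sum_congr rfl fun i _ => ?_
          have hui : u i = if x i ≠ y i then 1 else 0 := rfl
          rw [hui]
          simp only [hadef]
          ring
        rw [h1]
        have h2 := hproj u huV
        have h3 : ‖p‖⁻¹ * ‖p‖ ^ 2 ≤ ‖p‖⁻¹ * ⟪p, u⟫ :=
          mul_le_mul_of_nonneg_left h2 (inv_nonneg.mpr hpn.le)
        have h4 : ‖p‖⁻¹ * ‖p‖ ^ 2 = ‖p‖ := by field_simp
        linarith
      exact hle.trans (le_csSup hTbdd hmem)
  · exact Real.sSup_le hkey (norm_nonneg p)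
end

section
/- Let X = Ω_1 × ⋯ × Ω_n be a product of sets, let A ⊆ X be non-empty, and for x ∈ X let d_A(x) be the Euclidean distance in ℝ^n from the origin to the convex hull of { (1_{x_i ≠ y_i})_{1 ≤ i ≤ n} : y ∈ A }. If x, y ∈ X differ in at most one coordinate (i.e., there is an index i with x_j = y_j for all j ≠ i), then d_A(x)² − d_A(y)² ≤ 1. -/
open scoped Classical

private lemma euclid_normsq {n : ℕ} (v : EuclideanSpace ℝ (Fin n)) :
    ‖v‖ ^ 2 = ∑ j, (v j) ^ 2 := by
  rw [EuclideanSpace.norm_eq, Real.sq_sqrt (by positivity)]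
  simp [Real.norm_eq_abs, sq_abs]

/-- If `x` and `y` differ in at most one coordinate, then `d_A(x)² − d_A(y)² ≤ 1`. -/
theorem convexDist_sq_sub_le_one {n : ℕ} {Ω : Fin n → Type*}
    (A : Set (∀ i, Ω i)) (hA : A.Nonempty) (x y : ∀ i, Ω i)
    (hxy : ∃ i, ∀ j, j ≠ i → x j = y j) :
    convexDist A x ^ 2 - convexDist A y ^ 2 ≤ 1 := by
  obtain ⟨i, hi⟩ := hxy
  set Sx : Set (EuclideanSpace ℝ (Fin n)) :=
    {s | ∃ a ∈ A, ∀ j, s j = if x j ≠ a j then 1 else 0} with hSx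
  set Sy : Set (EuclideanSpace ℝ (Fin n)) :=
    {s | ∃ a ∈ A, ∀ j, s j = if y j ≠ a j then 1 else 0} with hSy
  have hdx : convexDist A x = Metric.infDist 0 (convexHull ℝ Sx) := rfl
  have hdy : convexDist A y = Metric.infDist 0 (convexHull ℝ Sy) := rfl
  -- the projection zeroing out coordinate `i`
  set π : EuclideanSpace ℝ (Fin n) → EuclideanSpace ℝ (Fin n) :=
    fun s => (WithLp.toLp 2 (fun j => if j = i then 0 else s j) : EuclideanSpace ℝ (Fin n)) with hπ
  have hπlin : IsLinearMap ℝ π := by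
    constructor
    · intro a b; ext j
      show (if j = i then 0 else (a + b) j)
        = (if j = i then 0 else a j) + (if j = i then 0 else b j)
      by_cases h : j = i <;> simp [h, PiLp.add_apply]
    · intro c a; ext j
      show (if j = i then 0 else (c • a) j) = c • (if j = i then 0 else a j)
      by_cases h : j = i <;> simp [h, PiLp.smul_apply]
  have hveq : ∀ u v : EuclideanSpace ℝ (Fin n), (∀ j, j ≠ i → u j = v j) → π u = π v := by
    intro u v h; ext j
    show (if j = i then 0 else u j) = (if j = i then 0 else v j)
    by_cases hj : j = i <;> simp [hj, h]
  -- π maps both vertex sets onto the same set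
  have himg : π '' Sx = π '' Sy := by
    ext s
    constructor
    · rintro ⟨v, ⟨a, ha, hv⟩, rfl⟩
      refine ⟨WithLp.toLp 2 (fun j => if y j ≠ a j then 1 else 0), ⟨a, ha, fun j => rfl⟩, ?_⟩
      refine (hveq _ _ fun j hj => ?_).symm
      rw [hv j, hi j hj]
    · rintro ⟨v, ⟨a, ha, hv⟩, rfl⟩
      refine ⟨WithLp.toLp 2 (fun j => if x j ≠ a j then 1 else 0), ⟨a, ha, fun j => rfl⟩, ?_⟩
      refine (hveq _ _ fun j hj => ?_).symm
      rw [hv j]; show _ = (if x j ≠ a j then 1 else 0); rw [hi j hj]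
  -- points of the hull of Sx have i-th coordinate in [0,1]
  have hq01 : ∀ q ∈ convexHull ℝ Sx, q i ∈ Set.Icc (0 : ℝ) 1 := by
    intro q hq
    have hconv : Convex ℝ {s : EuclideanSpace ℝ (Fin n) | s i ∈ Set.Icc (0 : ℝ) 1} := by
      have hl : IsLinearMap ℝ (fun s : EuclideanSpace ℝ (Fin n) => s i) :=
        ⟨fun a b => rfl, fun c a => rfl⟩
      exact (convex_Icc (0 : ℝ) 1).is_linear_preimage hl
    have hsub : Sx ⊆ {s : EuclideanSpace ℝ (Fin n) | s i ∈ Set.Icc (0 : ℝ) 1} := by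
      rintro v ⟨a, ha, hv⟩
      simp only [Set.mem_setOf_eq, hv i]
      split <;> norm_num
    exact convexHull_min hsub hconv hq
  -- key estimate
  have key : ∀ p ∈ convexHull ℝ Sy, convexDist A x ^ 2 ≤ ‖p‖ ^ 2 + 1 := by
    intro p hp
    have hπp : π p ∈ π '' convexHull ℝ Sx := by
      rw [hπlin.image_convexHull, himg, ← hπlin.image_convexHull]
      exact Set.mem_image_of_mem π hp
    obtain ⟨q, hq, hqp⟩ := hπp
    have hqj : ∀ j, j ≠ i → q j = p j := by
      intro j hj
      have := congrArg (fun v : EuclideanSpace ℝ (Fin n) => v j) hqp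
      simpa [hπ, hj] using this
    have hqnorm : ‖q‖ ^ 2 ≤ ‖p‖ ^ 2 + 1 := by
      rw [euclid_normsq, euclid_normsq]
      rw [← Finset.add_sum_erase Finset.univ (fun j => (q j) ^ 2) (Finset.mem_univ i)]
      have h1 : (q i) ^ 2 ≤ 1 := by
        obtain ⟨h0, h1⟩ := hq01 q hq
        nlinarith
      have h2 : ∑ j ∈ Finset.univ.erase i, (q j) ^ 2 = ∑ j ∈ Finset.univ.erase i, (p j) ^ 2 :=
        Finset.sum_congr rfl fun j hj => by rw [hqj j (Finset.mem_erase.1 hj).1]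
      have h3 : ∑ j ∈ Finset.univ.erase i, (p j) ^ 2 ≤ ∑ j, (p j) ^ 2 :=
        Finset.sum_le_sum_of_subset_of_nonneg (Finset.erase_subset i _)
          (fun j _ _ => sq_nonneg _)
      linarith
    have hle : convexDist A x ≤ ‖q‖ := by
      rw [hdx]
      have h := Metric.infDist_le_dist_of_mem (x := (0 : EuclideanSpace ℝ (Fin n))) hq
      rwa [dist_zero_left] at h
    calc convexDist A x ^ 2 ≤ ‖q‖ ^ 2 :=
          pow_le_pow_left₀ (hdx ▸ Metric.infDist_nonneg) hle 2
      _ ≤ ‖p‖ ^ 2 + 1 := hqnorm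
  by_cases hc : convexDist A x ^ 2 ≤ 1
  · linarith [sq_nonneg (convexDist A y)]
  · push_neg at hc
    set c : ℝ := convexDist A x ^ 2 - 1 with hcdef
    have hc0 : 0 < c := sub_pos.2 hc
    -- hull of Sy is nonempty
    have hney : (convexHull ℝ Sy).Nonempty := by
      obtain ⟨a, ha⟩ := hA
      exact ⟨WithLp.toLp 2 (fun j => if y j ≠ a j then 1 else 0),
        subset_convexHull ℝ Sy ⟨a, ha, fun j => rfl⟩⟩
    have hsq : Real.sqrt c ≤ convexDist A y := by
      rw [hdy]
      by_contra h
      push_neg at h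
      obtain ⟨p, hp, hdp⟩ := (Metric.infDist_lt_iff hney).1 h
      have hkey := key p hp
      have hnp : Real.sqrt c ≤ ‖p‖ := by
        have : c ≤ ‖p‖ ^ 2 := by linarith
        calc Real.sqrt c ≤ Real.sqrt (‖p‖ ^ 2) := Real.sqrt_le_sqrt this
          _ = ‖p‖ := Real.sqrt_sq (norm_nonneg p)
      rw [dist_zero_left] at hdp
      linarith
    have : c ≤ convexDist A y ^ 2 := by
      calc c = Real.sqrt c ^ 2 := (Real.sq_sqrt hc0.le).symm
        _ ≤ convexDist A y ^ 2 := pow_le_pow_left₀ (Real.sqrt_nonneg _) hsq 2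
    linarith
end
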